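/- The bulk equation H3 with δ=1, Q(u00,u10,u01,u11;a,b) = a(u00·u10 + u01·u11) − b(u00·u01 + u10·u11) + a² − b², together with the boundary equation q(x,y,z;a) = a² + a y(x+z) + μ and the parameter map σ(a) = μ/a (where μ is a fixed nonzero complex parameter and all occurring parameters a, b are nonzero), satisfies the 3D boundary consistency condition. -/

import Mathlib

/-- The bulk quad-graph equation. -/
noncomputable def Qbulk (u00 u10 u01 u11 a b : ℂ) : ℂ :=
  a * (u00 * u10 + u01 * u11) - b * (u00 * u01 + u10 * u11) + a ^ 2 - b ^ 2

/-- The boundary equation. -/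
noncomputable def qBdry (mu : ℂ) (x y z a : ℂ) : ℂ :=
  a ^ 2 + a * y * (x + z) + mu

/-- The parameter map acting on edge labels. -/
noncomputable def sigmaMap (mu : ℂ) (a : ℂ) : ℂ :=
  mu / a

set_option maxHeartbeats 4000000 in
/-- 3D boundary consistency of the triple (Q, q, σ). -/
theorem boundary_consistency_stmt_11
    (mu : ℂ) (a b : ℂ) (hμ : mu ≠ 0) (ha : a ≠ 0) (hb : b ≠ 0)
    (x x1 x2 y1 y2 y3 z1 z2 w1 w2 w3 : ℂ)
    -- the eight equations of the scheme
    (e1 : Qbulk y1 x2 x1 x a b = 0)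
    (e2 : qBdry mu x x1 y2 a = 0)
    (e3 : qBdry mu x x2 y3 b = 0)
    (e4 : Qbulk y1 z1 x2 y3 (sigmaMap mu b) a = 0)
    (e5 : Qbulk y1 z2 x1 y2 (sigmaMap mu a) b = 0)
    (e6 : qBdry mu y2 z2 w1 b = 0)
    (e7 : qBdry mu y3 z1 w2 a = 0)
    (e8 : Qbulk y1 z1 z2 w3 (sigmaMap mu b) (sigmaMap mu a) = 0)
    -- nonvanishing of the coefficient of the determined variable in each
    -- affine-linear equation (coefficient = value at 1 minus value at 0)
    (c1 : Qbulk 1 x2 x1 x a b - Qbulk 0 x2 x1 x a b ≠ 0)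
    (c2 : qBdry mu x x1 1 a - qBdry mu x x1 0 a ≠ 0)
    (c3 : qBdry mu x x2 1 b - qBdry mu x x2 0 b ≠ 0)
    (c4 : Qbulk y1 1 x2 y3 (sigmaMap mu b) a - Qbulk y1 0 x2 y3 (sigmaMap mu b) a ≠ 0)
    (c5 : Qbulk y1 1 x1 y2 (sigmaMap mu a) b - Qbulk y1 0 x1 y2 (sigmaMap mu a) b ≠ 0)
    (c6 : qBdry mu y2 z2 1 b - qBdry mu y2 z2 0 b ≠ 0)
    (c7 : qBdry mu y3 z1 1 a - qBdry mu y3 z1 0 a ≠ 0)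
    (c8 : Qbulk y1 z1 z2 1 (sigmaMap mu b) (sigmaMap mu a) - Qbulk y1 z1 z2 0 (sigmaMap mu b) (sigmaMap mu a) ≠ 0) :
    w1 = w2 ∧ w2 = w3 := by
  simp only [Qbulk, qBdry, sigmaMap] at e1 e2 e3 e4 e5 e6 e7 e8 c1 c2 c3 c4 c5 c6 c7 c8
  field_simp at e4 e5 e8 c4 c5 c8
  -- nonvanishing facts extracted from the coefficient hypotheses
  have hx1 : x1 ≠ 0 := by intro h; exact c2 (by rw [h]; ring)
  have hx2 : x2 ≠ 0 := by intro h; exact c3 (by rw [h]; ring)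
  have hz1n : z1 ≠ 0 := by intro h; exact c7 (by rw [h]; ring)
  have hz2n : z2 ≠ 0 := by intro h; exact c6 (by rw [h]; ring)
  have hd1 : a*x2 - b*x1 ≠ 0 := by intro h; exact c1 (by linear_combination h)
  have h4n : mu*y1 - a*b*y3 ≠ 0 := by intro h; exact c4 (by rw [div_eq_zero_iff]; left; linear_combination b * h)
  have h5n : mu*y1 - a*b*y2 ≠ 0 := by intro h; exact c5 (by rw [div_eq_zero_iff]; left; linear_combination a * h)
  have h8n : a*z2 - b*z1 ≠ 0 := by intro h; exact c8 (by rw [div_eq_zero_iff]; left; linear_combination mu*a*b * h)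
  -- the eight equations in cleared polynomial form
  have E1 : ((-1)*b^2 + 1*a^2 + 1*x2*a*y1 + (-1)*x1*b*y1 + (-1)*x*x2*b + 1*x*x1*a) = 0 := by linear_combination e1
  have E2 : (1*mu + 1*a^2 + 1*x1*a*y2 + 1*x*x1*a) = 0 := by linear_combination e2
  have E3 : (1*mu + 1*b^2 + 1*x2*b*y3 + 1*x*x2*b) = 0 := by linear_combination e3
  have E4 : (1*mu^2 + 1*b*mu*y1*z1 + (-1)*a*b^2*y3*z1 + (-1)*a^2*b^2 + 1*x2*b*mu*y3 + (-1)*x2*a*b^2*y1) = 0 := by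
    apply mul_left_cancel₀ hb; rw [mul_zero]; linear_combination b * e4
  have E5 : (1*mu^2 + 1*a*mu*y1*z2 + (-1)*a^2*b*y2*z2 + (-1)*a^2*b^2 + 1*x1*a*mu*y2 + (-1)*x1*a^2*b*y1) = 0 := by
    apply mul_left_cancel₀ ha; rw [mul_zero]; linear_combination a * e5
  have E6 : (1*mu + 1*b*z2*w1 + 1*b*y2*z2 + 1*b^2) = 0 := by linear_combination e6
  have E7 : (1*mu + 1*a*z1*w2 + 1*a*y3*z1 + 1*a^2) = 0 := by linear_combination e7
  have E8 : ((-1)*b^2*mu + (-1)*a*b^2*z1*w3 + (-1)*a*b^2*y1*z2 + 1*a^2*mu + 1*a^2*b*z2*w3 + 1*a^2*b*y1*z1) = 0 := by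
    apply mul_left_cancel₀ (mul_ne_zero (mul_ne_zero ha hb) hμ); rw [mul_zero]
    linear_combination a * b * e8
  have hw12 : w1 = w2 := by
    have Mne : ((b*z2)*(a*z1)*(a*(mu*y1 - a*b*y2))*(b*(mu*y1 - a*b*y3))*(b*x2)^2*(a*x1)^2*(a*x2 - b*x1)^2) ≠ 0 :=
      mul_ne_zero (mul_ne_zero (mul_ne_zero (mul_ne_zero (mul_ne_zero (mul_ne_zero
      (mul_ne_zero hb hz2n) (mul_ne_zero ha hz1n)) (mul_ne_zero ha h5n)) (mul_ne_zero hb h4n))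
      (pow_ne_zero 2 (mul_ne_zero hb hx2))) (pow_ne_zero 2 (mul_ne_zero ha hx1)))
      (pow_ne_zero 2 hd1)
    apply mul_left_cancel₀ Mne
    linear_combination ((-1)*x1^2*x2^4*a^6*b^4*mu^2*y1 + 1*x1^2*x2^4*a^8*b^6*y1 + 2*x1^3*x2^3*a^5*b^5*mu^2*y1 + (-2)*x1^3*x2^3*a^7*b^7*y1 + (-1)*x1^4*x2^2*a^4*b^6*mu^2*y1 + 1*x1^4*x2^2*a^6*b^8*y1 + (-1)*x*x1^2*x2^4*a^5*b^3*mu^3 + 1*x*x1^2*x2^4*a^7*b^5*mu + 2*x*x1^3*x2^3*a^4*b^4*mu^3 + (-2)*x*x1^3*x2^3*a^6*b^6*mu + (-1)*x*x1^4*x2^2*a^3*b^5*mu^3 + 1*x*x1^4*x2^2*a^5*b^7*mu) * E1 + ((-1)*x1^2*x2^4*a^4*b^4*mu^3*y1 + 1*x1^2*x2^4*a^5*b^5*mu^2*y2 + 1*x1^2*x2^4*a^7*b^5*mu*y2 + (-1)*x1^2*x2^4*a^8*b^6*y1 + 1*x1^2*x2^5*a^6*b^5*mu*y1*y2 + (-1)*x1^2*x2^5*a^7*b^6*y1^2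 + 2*x1^3*x2^3*a^3*b^5*mu^3*y1 + (-2)*x1^3*x2^3*a^4*b^6*mu^2*y2 + (-2)*x1^3*x2^3*a^6*b^6*mu*y2 + 2*x1^3*x2^3*a^7*b^7*y1 + (-2)*x1^3*x2^4*a^5*b^6*mu*y1*y2 + 2*x1^3*x2^4*a^6*b^7*y1^2 + (-1)*x1^4*x2^2*a^2*b^6*mu^3*y1 + 1*x1^4*x2^2*a^3*b^7*mu^2*y2 + 1*x1^4*x2^2*a^5*b^7*mu*y2 + (-1)*x1^4*x2^2*a^6*b^8*y1 + 1*x1^4*x2^3*a^4*b^7*mu*y1*y2 + (-1)*x1^4*x2^3*a^5*b^8*y1^2 + 1*x*x1^2*x2^4*a^5*b^3*mu^3 + (-1)*x*x1^2*x2^4*a^7*b^5*mu + 1*x*x1^2*x2^5*a^5*b^4*mu^2*y2 + (-1)*x*x1^2*x2^5*a^6*b^5*mu*y1 + (-2)*x*x1^3*x2^3*a^4*b^4*mu^3 + 2*x*x1^3*x2^3*a^6*b^6*mu + (-2)*x*x1^3*x2^4*a^4*b^5*mu^2*y2 + 2*x*x1^3*x2^4*a^5*b^6*mu*y1 + 1*x*x1^4*x2^2*a^3*b^5*mu^3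 + (-1)*x*x1^4*x2^2*a^5*b^7*mu + 1*x*x1^4*x2^3*a^3*b^6*mu^2*y2 + (-1)*x*x1^4*x2^3*a^4*b^7*mu*y1) * E2 + (1*x1^2*x2^4*a^5*b^3*mu^3*y3 + (-1)*x1^2*x2^4*a^5*b^3*mu^3*y2 + 1*x1^2*x2^4*a^6*b^2*mu^3*y1 + (-1)*x1^2*x2^4*a^7*b^3*mu^2*y2 + (-1)*x1^2*x2^4*a^7*b^5*mu*y3 + 1*x1^2*x2^4*a^8*b^6*y1 + (-2)*x1^3*x2^3*a^4*b^4*mu^3*y3 + 2*x1^3*x2^3*a^4*b^4*mu^3*y2 + (-2)*x1^3*x2^3*a^5*b^3*mu^3*y1 + 2*x1^3*x2^3*a^6*b^4*mu^2*y2 + 2*x1^3*x2^3*a^6*b^6*mu*y3 + (-2)*x1^3*x2^3*a^7*b^7*y1 + 1*x1^3*x2^4*a^6*b^3*mu^2*y2*y3 + (-1)*x1^3*x2^4*a^6*b^3*mu^2*y2^2 + (-1)*x1^3*x2^4*a^7*b^4*mu*y1*y3 + 1*x1^3*x2^4*a^8*b^5*y1^2 + 1*x1^4*x2^2*a^3*b^5*mu^3*y3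 + (-1)*x1^4*x2^2*a^3*b^5*mu^3*y2 + 1*x1^4*x2^2*a^4*b^4*mu^3*y1 + (-1)*x1^4*x2^2*a^5*b^5*mu^2*y2 + (-1)*x1^4*x2^2*a^5*b^7*mu*y3 + 1*x1^4*x2^2*a^6*b^8*y1 + (-2)*x1^4*x2^3*a^5*b^4*mu^2*y2*y3 + 2*x1^4*x2^3*a^5*b^4*mu^2*y2^2 + 2*x1^4*x2^3*a^6*b^5*mu*y1*y3 + (-2)*x1^4*x2^3*a^7*b^6*y1^2 + 1*x1^5*x2^2*a^4*b^5*mu^2*y2*y3 + (-1)*x1^5*x2^2*a^4*b^5*mu^2*y2^2 + (-1)*x1^5*x2^2*a^5*b^6*mu*y1*y3 + 1*x1^5*x2^2*a^6*b^7*y1^2 + (-1)*x*x1^2*x2^4*a^5*b^3*mu^3 + 1*x*x1^2*x2^4*a^7*b^5*mu + 2*x*x1^3*x2^3*a^4*b^4*mu^3 + (-2)*x*x1^3*x2^3*a^6*b^6*mu + (-1)*x*x1^3*x2^4*a^6*b^3*mu^2*y2 + 1*x*x1^3*x2^4*a^7*b^4*mu*y1 + (-1)*x*x1^4*x2^2*a^3*b^5*mu^3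 + 1*x*x1^4*x2^2*a^5*b^7*mu + 2*x*x1^4*x2^3*a^5*b^4*mu^2*y2 + (-2)*x*x1^4*x2^3*a^6*b^5*mu*y1 + (-1)*x*x1^5*x2^2*a^4*b^5*mu^2*y2 + 1*x*x1^5*x2^2*a^5*b^6*mu*y1) * E3 + ((-1)*x1^2*x2^4*a^5*b^3*mu^2*y3 + 1*x1^2*x2^4*a^5*b^3*mu^2*y2 + (-1)*x1^2*x2^4*a^6*b^2*mu^2*y1 + (-1)*x1^2*x2^4*a^6*b^4*mu*y1 + 1*x1^2*x2^4*a^7*b^3*mu*y2 + 1*x1^2*x2^4*a^7*b^5*y3 + 2*x1^3*x2^3*a^4*b^4*mu^2*y3 + (-2)*x1^3*x2^3*a^4*b^4*mu^2*y2 + 2*x1^3*x2^3*a^5*b^3*mu^2*y1 + 2*x1^3*x2^3*a^5*b^5*mu*y1 + (-2)*x1^3*x2^3*a^6*b^4*mu*y2 + (-2)*x1^3*x2^3*a^6*b^6*y3 + (-1)*x1^3*x2^4*a^6*b^3*mu*y2*y3 + 1*x1^3*x2^4*a^6*b^3*mu*y2^2 + 1*x1^3*x2^4*a^7*b^4*y1*y3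 + (-1)*x1^3*x2^4*a^7*b^4*y1*y2 + (-1)*x1^4*x2^2*a^3*b^5*mu^2*y3 + 1*x1^4*x2^2*a^3*b^5*mu^2*y2 + (-1)*x1^4*x2^2*a^4*b^4*mu^2*y1 + (-1)*x1^4*x2^2*a^4*b^6*mu*y1 + 1*x1^4*x2^2*a^5*b^5*mu*y2 + 1*x1^4*x2^2*a^5*b^7*y3 + 2*x1^4*x2^3*a^5*b^4*mu*y2*y3 + (-2)*x1^4*x2^3*a^5*b^4*mu*y2^2 + (-2)*x1^4*x2^3*a^6*b^5*y1*y3 + 2*x1^4*x2^3*a^6*b^5*y1*y2 + (-1)*x1^5*x2^2*a^4*b^5*mu*y2*y3 + 1*x1^5*x2^2*a^4*b^5*mu*y2^2 + 1*x1^5*x2^2*a^5*b^6*y1*y3 + (-1)*x1^5*x2^2*a^5*b^6*y1*y2) * E4 + (1*x1^2*x2^4*a^4*b^4*mu^2*y1 + 1*x1^2*x2^4*a^5*b^4*mu*y1*y3*z1 + (-1)*x1^2*x2^4*a^5*b^4*mu*y1*y2*z1 + (-1)*x1^2*x2^4*a^5*b^5*mu*y3 + 1*x1^2*x2^4*a^6*b^4*mu*y1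 + (-1)*x1^2*x2^4*a^6*b^5*y3^2*z1 + 1*x1^2*x2^4*a^6*b^5*y2*y3*z1 + (-1)*x1^2*x2^4*a^7*b^5*y3 + (-2)*x1^3*x2^3*a^3*b^5*mu^2*y1 + (-2)*x1^3*x2^3*a^4*b^5*mu*y1*y3*z1 + 2*x1^3*x2^3*a^4*b^5*mu*y1*y2*z1 + 2*x1^3*x2^3*a^4*b^6*mu*y3 + (-2)*x1^3*x2^3*a^5*b^5*mu*y1 + 2*x1^3*x2^3*a^5*b^6*y3^2*z1 + (-2)*x1^3*x2^3*a^5*b^6*y2*y3*z1 + 2*x1^3*x2^3*a^6*b^6*y3 + 1*x1^4*x2^2*a^2*b^6*mu^2*y1 + 1*x1^4*x2^2*a^3*b^6*mu*y1*y3*z1 + (-1)*x1^4*x2^2*a^3*b^6*mu*y1*y2*z1 + (-1)*x1^4*x2^2*a^3*b^7*mu*y3 + 1*x1^4*x2^2*a^4*b^6*mu*y1 + (-1)*x1^4*x2^2*a^4*b^7*y3^2*z1 + 1*x1^4*x2^2*a^4*b^7*y2*y3*z1 + (-1)*x1^4*x2^2*a^5*b^7*y3) * E5 + (1*x1^2*x2^4*a^6*b^3*mu^2*y1^2*z1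 + (-1)*x1^2*x2^4*a^7*b^4*mu*y1*y3*z1 + (-1)*x1^2*x2^4*a^7*b^4*mu*y1*y2*z1 + 1*x1^2*x2^4*a^8*b^5*y2*y3*z1 + (-2)*x1^3*x2^3*a^5*b^4*mu^2*y1^2*z1 + 2*x1^3*x2^3*a^6*b^5*mu*y1*y3*z1 + 2*x1^3*x2^3*a^6*b^5*mu*y1*y2*z1 + (-2)*x1^3*x2^3*a^7*b^6*y2*y3*z1 + 1*x1^4*x2^2*a^4*b^5*mu^2*y1^2*z1 + (-1)*x1^4*x2^2*a^5*b^6*mu*y1*y3*z1 + (-1)*x1^4*x2^2*a^5*b^6*mu*y1*y2*z1 + 1*x1^4*x2^2*a^6*b^7*y2*y3*z1) * E6 + ((-1)*x1^2*x2^4*a^5*b^4*mu^2*y1^2*z2 + 1*x1^2*x2^4*a^6*b^5*mu*y1*y3*z2 + 1*x1^2*x2^4*a^6*b^5*mu*y1*y2*z2 + (-1)*x1^2*x2^4*a^7*b^6*y2*y3*z2 + 2*x1^3*x2^3*a^4*b^5*mu^2*y1^2*z2 + (-2)*x1^3*x2^3*a^5*b^6*mu*y1*y3*z2 + (-2)*x1^3*x2^3*a^5*b^6*mu*y1*y2*z2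 + 2*x1^3*x2^3*a^6*b^7*y2*y3*z2 + (-1)*x1^4*x2^2*a^3*b^6*mu^2*y1^2*z2 + 1*x1^4*x2^2*a^4*b^7*mu*y1*y3*z2 + 1*x1^4*x2^2*a^4*b^7*mu*y1*y2*z2 + (-1)*x1^4*x2^2*a^5*b^8*y2*y3*z2) * E7
  have hw23 : w2 = w3 := by
    have Mne : ((a*z1)*(a*b*(a*z2 - b*z1))*(a*(mu*y1 - a*b*y2))*(b*(mu*y1 - a*b*y3))^2*(b*x2)^3*(a*x1)*(a*x2 - b*x1)^4) ≠ 0 :=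
      mul_ne_zero (mul_ne_zero (mul_ne_zero (mul_ne_zero (mul_ne_zero (mul_ne_zero
      (mul_ne_zero ha hz1n) (mul_ne_zero (mul_ne_zero ha hb) h8n)) (mul_ne_zero ha h5n))
      (pow_ne_zero 2 (mul_ne_zero hb h4n))) (pow_ne_zero 3 (mul_ne_zero hb hx2)))
      (mul_ne_zero ha hx1)) (pow_ne_zero 4 hd1)
    apply mul_left_cancel₀ Mne
    linear_combination (1*x2^6*a^8*b^7*mu^4 + 1*x2^6*a^8*b^9*mu^3 + 2*x2^6*a^10*b^7*mu^3 + 2*x2^6*a^10*b^9*mu^2 + 1*x2^6*a^12*b^7*mu^2 + 1*x2^6*a^12*b^9*mu + 1*x2^7*a^9*b^7*mu^3*y1 + 2*x2^7*a^9*b^9*mu^2*y1 + 1*x2^7*a^11*b^7*mu^2*y1 + 3*x2^7*a^11*b^9*mu*y1 + 1*x2^7*a^13*b^9*y1 + 1*x2^8*a^10*b^9*mu*y1^2 + 1*x2^8*a^12*b^9*y1^2 + (-4)*x1*x2^5*a^7*b^8*mu^4 + (-4)*x1*x2^5*a^7*b^10*mu^3 + (-8)*x1*x2^5*a^9*b^8*mu^3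 + (-8)*x1*x2^5*a^9*b^10*mu^2 + (-4)*x1*x2^5*a^11*b^8*mu^2 + (-4)*x1*x2^5*a^11*b^10*mu + (-4)*x1*x2^6*a^8*b^8*mu^3*y1 + (-8)*x1*x2^6*a^8*b^10*mu^2*y1 + 1*x1*x2^6*a^10*b^6*mu^3*y1 + (-2)*x1*x2^6*a^10*b^8*mu^2*y1 + (-11)*x1*x2^6*a^10*b^10*mu*y1 + (-4)*x1*x2^6*a^12*b^10*y1 + 1*x1*x2^7*a^9*b^6*mu^3*y1^2 + 1*x1*x2^7*a^9*b^8*mu^2*y1^2 + (-4)*x1*x2^7*a^9*b^10*mu*y1^2 + 1*x1*x2^7*a^11*b^8*mu*y1^2 + (-3)*x1*x2^7*a^11*b^10*y1^2 + 1*x1*x2^8*a^10*b^8*mu*y1^3 + 6*x1^2*x2^4*a^6*b^9*mu^4 + 6*x1^2*x2^4*a^6*b^11*mu^3 + 12*x1^2*x2^4*a^8*b^9*mu^3 + 12*x1^2*x2^4*a^8*b^11*mu^2 + 6*x1^2*x2^4*a^10*b^9*mu^2 + 6*x1^2*x2^4*a^10*b^11*mu + 6*x1^2*x2^5*a^7*b^9*mu^3*y1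 + 12*x1^2*x2^5*a^7*b^11*mu^2*y1 + (-4)*x1^2*x2^5*a^9*b^7*mu^3*y1 + (-2)*x1^2*x2^5*a^9*b^9*mu^2*y1 + 14*x1^2*x2^5*a^9*b^11*mu*y1 + 6*x1^2*x2^5*a^11*b^11*y1 + (-4)*x1^2*x2^6*a^8*b^7*mu^3*y1^2 + (-4)*x1^2*x2^6*a^8*b^9*mu^2*y1^2 + 6*x1^2*x2^6*a^8*b^11*mu*y1^2 + (-4)*x1^2*x2^6*a^10*b^9*mu*y1^2 + 2*x1^2*x2^6*a^10*b^11*y1^2 + (-4)*x1^2*x2^7*a^9*b^9*mu*y1^3 + (-4)*x1^3*x2^3*a^5*b^10*mu^4 + (-4)*x1^3*x2^3*a^5*b^12*mu^3 + (-8)*x1^3*x2^3*a^7*b^10*mu^3 + (-8)*x1^3*x2^3*a^7*b^12*mu^2 + (-4)*x1^3*x2^3*a^9*b^10*mu^2 + (-4)*x1^3*x2^3*a^9*b^12*mu + (-4)*x1^3*x2^4*a^6*b^10*mu^3*y1 + (-8)*x1^3*x2^4*a^6*b^12*mu^2*y1 + 6*x1^3*x2^4*a^8*b^8*mu^3*y1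 + 8*x1^3*x2^4*a^8*b^10*mu^2*y1 + (-6)*x1^3*x2^4*a^8*b^12*mu*y1 + (-4)*x1^3*x2^4*a^10*b^12*y1 + 6*x1^3*x2^5*a^7*b^8*mu^3*y1^2 + 6*x1^3*x2^5*a^7*b^10*mu^2*y1^2 + (-4)*x1^3*x2^5*a^7*b^12*mu*y1^2 + 6*x1^3*x2^5*a^9*b^10*mu*y1^2 + 2*x1^3*x2^5*a^9*b^12*y1^2 + 6*x1^3*x2^6*a^8*b^10*mu*y1^3 + 1*x1^4*x2^2*a^4*b^11*mu^4 + 1*x1^4*x2^2*a^4*b^13*mu^3 + 2*x1^4*x2^2*a^6*b^11*mu^3 + 2*x1^4*x2^2*a^6*b^13*mu^2 + 1*x1^4*x2^2*a^8*b^11*mu^2 + 1*x1^4*x2^2*a^8*b^13*mu + 1*x1^4*x2^3*a^5*b^11*mu^3*y1 + 2*x1^4*x2^3*a^5*b^13*mu^2*y1 + (-4)*x1^4*x2^3*a^7*b^9*mu^3*y1 + (-7)*x1^4*x2^3*a^7*b^11*mu^2*y1 + (-1)*x1^4*x2^3*a^7*b^13*mu*y1 + 1*x1^4*x2^3*a^9*b^13*y1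 + (-4)*x1^4*x2^4*a^6*b^9*mu^3*y1^2 + (-4)*x1^4*x2^4*a^6*b^11*mu^2*y1^2 + 1*x1^4*x2^4*a^6*b^13*mu*y1^2 + (-4)*x1^4*x2^4*a^8*b^11*mu*y1^2 + (-3)*x1^4*x2^4*a^8*b^13*y1^2 + (-4)*x1^4*x2^5*a^7*b^11*mu*y1^3 + 1*x1^5*x2^2*a^6*b^10*mu^3*y1 + 2*x1^5*x2^2*a^6*b^12*mu^2*y1 + 1*x1^5*x2^2*a^6*b^14*mu*y1 + 1*x1^5*x2^3*a^5*b^10*mu^3*y1^2 + 1*x1^5*x2^3*a^5*b^12*mu^2*y1^2 + 1*x1^5*x2^3*a^7*b^12*mu*y1^2 + 1*x1^5*x2^3*a^7*b^14*y1^2 + 1*x1^5*x2^4*a^6*b^12*mu*y1^3 + 1*x*x2^7*a^8*b^6*mu^4 + 2*x*x2^7*a^8*b^8*mu^3 + 1*x*x2^7*a^10*b^6*mu^3 + 3*x*x2^7*a^10*b^8*mu^2 + 1*x*x2^7*a^12*b^8*mu + 2*x*x2^8*a^9*b^8*mu^2*y1 + 2*x*x2^8*a^11*b^8*mu*y1 +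 (-4)*x*x1*x2^6*a^7*b^7*mu^4 + (-8)*x*x1*x2^6*a^7*b^9*mu^3 + 1*x*x1*x2^6*a^9*b^5*mu^4 + (-2)*x*x1*x2^6*a^9*b^7*mu^3 + (-11)*x*x1*x2^6*a^9*b^9*mu^2 + (-4)*x*x1*x2^6*a^11*b^9*mu + 1*x*x1*x2^7*a^8*b^5*mu^4*y1 + 1*x*x1*x2^7*a^8*b^7*mu^3*y1 + (-8)*x*x1*x2^7*a^8*b^9*mu^2*y1 + 3*x*x1*x2^7*a^10*b^7*mu^2*y1 + (-5)*x*x1*x2^7*a^10*b^9*mu*y1 + 2*x*x1*x2^8*a^9*b^7*mu^2*y1^2 + 1*x*x1*x2^8*a^11*b^9*y1^2 + 6*x*x1^2*x2^5*a^6*b^8*mu^4 + 12*x*x1^2*x2^5*a^6*b^10*mu^3 + (-4)*x*x1^2*x2^5*a^8*b^6*mu^4 + (-2)*x*x1^2*x2^5*a^8*b^8*mu^3 + 14*x*x1^2*x2^5*a^8*b^10*mu^2 + 6*x*x1^2*x2^5*a^10*b^10*mu + (-4)*x*x1^2*x2^6*a^7*b^6*mu^4*y1 + (-4)*x*x1^2*x2^6*a^7*b^8*mu^3*y1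 + 12*x*x1^2*x2^6*a^7*b^10*mu^2*y1 + (-12)*x*x1^2*x2^6*a^9*b^8*mu^2*y1 + (-8)*x*x1^2*x2^7*a^8*b^8*mu^2*y1^2 + (-4)*x*x1^2*x2^7*a^10*b^10*y1^2 + (-4)*x*x1^3*x2^4*a^5*b^9*mu^4 + (-8)*x*x1^3*x2^4*a^5*b^11*mu^3 + 6*x*x1^3*x2^4*a^7*b^7*mu^4 + 8*x*x1^3*x2^4*a^7*b^9*mu^3 + (-6)*x*x1^3*x2^4*a^7*b^11*mu^2 + (-4)*x*x1^3*x2^4*a^9*b^11*mu + 6*x*x1^3*x2^5*a^6*b^7*mu^4*y1 + 6*x*x1^3*x2^5*a^6*b^9*mu^3*y1 + (-8)*x*x1^3*x2^5*a^6*b^11*mu^2*y1 + 18*x*x1^3*x2^5*a^8*b^9*mu^2*y1 + 10*x*x1^3*x2^5*a^8*b^11*mu*y1 + 12*x*x1^3*x2^6*a^7*b^9*mu^2*y1^2 + 6*x*x1^3*x2^6*a^9*b^11*y1^2 + 1*x*x1^4*x2^3*a^4*b^10*mu^4 + 2*x*x1^4*x2^3*a^4*b^12*mu^3 + (-4)*x*x1^4*x2^3*a^6*b^8*mu^4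 + (-7)*x*x1^4*x2^3*a^6*b^10*mu^3 + (-1)*x*x1^4*x2^3*a^6*b^12*mu^2 + 1*x*x1^4*x2^3*a^8*b^12*mu + (-4)*x*x1^4*x2^4*a^5*b^8*mu^4*y1 + (-4)*x*x1^4*x2^4*a^5*b^10*mu^3*y1 + 2*x*x1^4*x2^4*a^5*b^12*mu^2*y1 + (-12)*x*x1^4*x2^4*a^7*b^10*mu^2*y1 + (-10)*x*x1^4*x2^4*a^7*b^12*mu*y1 + (-8)*x*x1^4*x2^5*a^6*b^10*mu^2*y1^2 + (-4)*x*x1^4*x2^5*a^8*b^12*y1^2 + 1*x*x1^5*x2^2*a^5*b^9*mu^4 + 2*x*x1^5*x2^2*a^5*b^11*mu^3 + 1*x*x1^5*x2^2*a^5*b^13*mu^2 + 1*x*x1^5*x2^3*a^4*b^9*mu^4*y1 + 1*x*x1^5*x2^3*a^4*b^11*mu^3*y1 + 3*x*x1^5*x2^3*a^6*b^11*mu^2*y1 + 3*x*x1^5*x2^3*a^6*b^13*mu*y1 + 2*x*x1^5*x2^4*a^5*b^11*mu^2*y1^2 + 1*x*x1^5*x2^4*a^7*b^13*y1^2 + 1*x^2*x2^8*a^8*b^7*mu^3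 + 1*x^2*x2^8*a^10*b^7*mu^2 + (-4)*x^2*x1*x2^7*a^7*b^8*mu^3 + 2*x^2*x1*x2^7*a^9*b^6*mu^3 + (-2)*x^2*x1*x2^7*a^9*b^8*mu^2 + 1*x^2*x1*x2^8*a^8*b^6*mu^3*y1 + 2*x^2*x1*x2^8*a^10*b^8*mu*y1 + 6*x^2*x1^2*x2^6*a^6*b^9*mu^3 + (-8)*x^2*x1^2*x2^6*a^8*b^7*mu^3 + (-2)*x^2*x1^2*x2^6*a^8*b^9*mu^2 + (-4)*x^2*x1^2*x2^7*a^7*b^7*mu^3*y1 + (-8)*x^2*x1^2*x2^7*a^9*b^9*mu*y1 + (-4)*x^2*x1^3*x2^5*a^5*b^10*mu^3 + 12*x^2*x1^3*x2^5*a^7*b^8*mu^3 + 8*x^2*x1^3*x2^5*a^7*b^10*mu^2 + 6*x^2*x1^3*x2^6*a^6*b^8*mu^3*y1 + 12*x^2*x1^3*x2^6*a^8*b^10*mu*y1 + 1*x^2*x1^4*x2^4*a^4*b^11*mu^3 + (-8)*x^2*x1^4*x2^4*a^6*b^9*mu^3 + (-7)*x^2*x1^4*x2^4*a^6*b^11*mu^2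 + (-4)*x^2*x1^4*x2^5*a^5*b^9*mu^3*y1 + (-8)*x^2*x1^4*x2^5*a^7*b^11*mu*y1 + 2*x^2*x1^5*x2^3*a^5*b^10*mu^3 + 2*x^2*x1^5*x2^3*a^5*b^12*mu^2 + 1*x^2*x1^5*x2^4*a^4*b^10*mu^3*y1 + 2*x^2*x1^5*x2^4*a^6*b^12*mu*y1 + 1*x^3*x1*x2^8*a^9*b^7*mu^2 + (-4)*x^3*x1^2*x2^7*a^8*b^8*mu^2 + 6*x^3*x1^3*x2^6*a^7*b^9*mu^2 + (-4)*x^3*x1^4*x2^5*a^6*b^10*mu^2 + 1*x^3*x1^5*x2^4*a^5*b^11*mu^2) * E1 + (1*x2^6*a^8*b^9*mu^3 + 1*x2^6*a^8*b^11*mu^2 + (-1)*x2^6*a^10*b^7*mu^3 + 1*x2^6*a^10*b^11*mu + (-1)*x2^6*a^12*b^7*mu^2 + (-1)*x2^6*a^12*b^9*mu + (-1)*x2^7*a^9*b^7*mu^3*y1 + 2*x2^7*a^9*b^11*mu*y1 + (-2)*x2^7*a^11*b^7*mu^2*y1 + (-3)*x2^7*a^11*b^9*mu*y1 + 1*x2^7*a^11*b^11*y1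 + (-1)*x2^7*a^13*b^9*y1 + (-1)*x2^8*a^10*b^7*mu^2*y1^2 + (-2)*x2^8*a^10*b^9*mu*y1^2 + 1*x2^8*a^10*b^11*y1^2 + (-2)*x2^8*a^12*b^9*y1^2 + (-1)*x2^9*a^11*b^9*y1^3 + (-4)*x1*x2^5*a^7*b^10*mu^3 + (-4)*x1*x2^5*a^7*b^12*mu^2 + 4*x1*x2^5*a^9*b^8*mu^3 + (-4)*x1*x2^5*a^9*b^12*mu + 4*x1*x2^5*a^11*b^8*mu^2 + 4*x1*x2^5*a^11*b^10*mu + 1*x1*x2^6*a^8*b^6*mu^4*y1 + 6*x1*x2^6*a^8*b^8*mu^3*y1 + 1*x1*x2^6*a^8*b^10*mu^2*y1 + (-8)*x1*x2^6*a^8*b^12*mu*y1 + 8*x1*x2^6*a^10*b^8*mu^2*y1 + 12*x1*x2^6*a^10*b^10*mu*y1 + (-4)*x1*x2^6*a^10*b^12*y1 + 4*x1*x2^6*a^12*b^10*y1 + 1*x1*x2^7*a^7*b^6*mu^4*y1^2 + 1*x1*x2^7*a^7*b^8*mu^3*y1^2 + 5*x1*x2^7*a^9*b^8*mu^2*y1^2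 + 9*x1*x2^7*a^9*b^10*mu*y1^2 + (-4)*x1*x2^7*a^9*b^12*y1^2 + 8*x1*x2^7*a^11*b^10*y1^2 + 1*x1*x2^8*a^8*b^8*mu^2*y1^3 + 4*x1*x2^8*a^10*b^10*y1^3 + 6*x1^2*x2^4*a^6*b^11*mu^3 + 6*x1^2*x2^4*a^6*b^13*mu^2 + (-6)*x1^2*x2^4*a^8*b^9*mu^3 + 6*x1^2*x2^4*a^8*b^13*mu + (-6)*x1^2*x2^4*a^10*b^9*mu^2 + (-6)*x1^2*x2^4*a^10*b^11*mu + (-4)*x1^2*x2^5*a^7*b^7*mu^4*y1 + (-14)*x1^2*x2^5*a^7*b^9*mu^3*y1 + (-4)*x1^2*x2^5*a^7*b^11*mu^2*y1 + 12*x1^2*x2^5*a^7*b^13*mu*y1 + (-12)*x1^2*x2^5*a^9*b^9*mu^2*y1 + (-18)*x1^2*x2^5*a^9*b^11*mu*y1 + 6*x1^2*x2^5*a^9*b^13*y1 + (-6)*x1^2*x2^5*a^11*b^11*y1 + (-4)*x1^2*x2^6*a^6*b^7*mu^4*y1^2 + (-4)*x1^2*x2^6*a^6*b^9*mu^3*y1^2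 + (-10)*x1^2*x2^6*a^8*b^9*mu^2*y1^2 + (-16)*x1^2*x2^6*a^8*b^11*mu*y1^2 + 6*x1^2*x2^6*a^8*b^13*y1^2 + (-12)*x1^2*x2^6*a^10*b^11*y1^2 + (-4)*x1^2*x2^7*a^7*b^9*mu^2*y1^3 + (-6)*x1^2*x2^7*a^9*b^11*y1^3 + (-4)*x1^3*x2^3*a^5*b^12*mu^3 + (-4)*x1^3*x2^3*a^5*b^14*mu^2 + 4*x1^3*x2^3*a^7*b^10*mu^3 + (-4)*x1^3*x2^3*a^7*b^14*mu + 4*x1^3*x2^3*a^9*b^10*mu^2 + 4*x1^3*x2^3*a^9*b^12*mu + 6*x1^3*x2^4*a^6*b^8*mu^4*y1 + 16*x1^3*x2^4*a^6*b^10*mu^3*y1 + 6*x1^3*x2^4*a^6*b^12*mu^2*y1 + (-8)*x1^3*x2^4*a^6*b^14*mu*y1 + 8*x1^3*x2^4*a^8*b^10*mu^2*y1 + 12*x1^3*x2^4*a^8*b^12*mu*y1 + (-4)*x1^3*x2^4*a^8*b^14*y1 + 4*x1^3*x2^4*a^10*b^12*y1 + 6*x1^3*x2^5*a^5*b^8*mu^4*y1^2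 + 6*x1^3*x2^5*a^5*b^10*mu^3*y1^2 + 10*x1^3*x2^5*a^7*b^10*mu^2*y1^2 + 14*x1^3*x2^5*a^7*b^12*mu*y1^2 + (-4)*x1^3*x2^5*a^7*b^14*y1^2 + 8*x1^3*x2^5*a^9*b^12*y1^2 + 6*x1^3*x2^6*a^6*b^10*mu^2*y1^3 + 4*x1^3*x2^6*a^8*b^12*y1^3 + 1*x1^4*x2^2*a^4*b^13*mu^3 + 1*x1^4*x2^2*a^4*b^15*mu^2 + (-1)*x1^4*x2^2*a^6*b^11*mu^3 + 1*x1^4*x2^2*a^6*b^15*mu + (-1)*x1^4*x2^2*a^8*b^11*mu^2 + (-1)*x1^4*x2^2*a^8*b^13*mu + (-4)*x1^4*x2^3*a^5*b^9*mu^4*y1 + (-9)*x1^4*x2^3*a^5*b^11*mu^3*y1 + (-4)*x1^4*x2^3*a^5*b^13*mu^2*y1 + 2*x1^4*x2^3*a^5*b^15*mu*y1 + (-2)*x1^4*x2^3*a^7*b^11*mu^2*y1 + (-3)*x1^4*x2^3*a^7*b^13*mu*y1 + 1*x1^4*x2^3*a^7*b^15*y1 + (-1)*x1^4*x2^3*a^9*b^13*y1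 + (-4)*x1^4*x2^4*a^4*b^9*mu^4*y1^2 + (-4)*x1^4*x2^4*a^4*b^11*mu^3*y1^2 + (-5)*x1^4*x2^4*a^6*b^11*mu^2*y1^2 + (-6)*x1^4*x2^4*a^6*b^13*mu*y1^2 + 1*x1^4*x2^4*a^6*b^15*y1^2 + (-2)*x1^4*x2^4*a^8*b^13*y1^2 + (-4)*x1^4*x2^5*a^5*b^11*mu^2*y1^3 + (-1)*x1^4*x2^5*a^7*b^13*y1^3 + 1*x1^5*x2^2*a^4*b^10*mu^4*y1 + 2*x1^5*x2^2*a^4*b^12*mu^3*y1 + 1*x1^5*x2^2*a^4*b^14*mu^2*y1 + 1*x1^5*x2^3*a^3*b^10*mu^4*y1^2 + 1*x1^5*x2^3*a^3*b^12*mu^3*y1^2 + 1*x1^5*x2^3*a^5*b^12*mu^2*y1^2 + 1*x1^5*x2^3*a^5*b^14*mu*y1^2 + 1*x1^5*x2^4*a^4*b^12*mu^2*y1^3 + 2*x*x2^7*a^8*b^8*mu^3 + 3*x*x2^7*a^8*b^10*mu^2 + (-1)*x*x2^7*a^10*b^6*mu^3 + (-1)*x*x2^7*a^10*b^8*mu^2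 + 2*x*x2^7*a^10*b^10*mu + (-1)*x*x2^7*a^12*b^8*mu + (-1)*x*x2^8*a^9*b^6*mu^3*y1 + (-1)*x*x2^8*a^9*b^8*mu^2*y1 + 4*x*x2^8*a^9*b^10*mu*y1 + (-3)*x*x2^8*a^11*b^8*mu*y1 + 1*x*x2^8*a^11*b^10*y1 + (-2)*x*x2^9*a^10*b^8*mu*y1^2 + 1*x*x2^9*a^10*b^10*y1^2 + (-8)*x*x1*x2^6*a^7*b^9*mu^3 + (-12)*x*x1*x2^6*a^7*b^11*mu^2 + (-1)*x*x1*x2^6*a^9*b^5*mu^4 + 2*x*x1*x2^6*a^9*b^7*mu^3 + 3*x*x1*x2^6*a^9*b^9*mu^2 + (-8)*x*x1*x2^6*a^9*b^11*mu + 4*x*x1*x2^6*a^11*b^9*mu + (-1)*x*x1*x2^7*a^8*b^5*mu^4*y1 + 5*x*x1*x2^7*a^8*b^7*mu^3*y1 + 6*x*x1*x2^7*a^8*b^9*mu^2*y1 + (-16)*x*x1*x2^7*a^8*b^11*mu*y1 + (-1)*x*x1*x2^7*a^10*b^7*mu^2*y1 + 11*x*x1*x2^7*a^10*b^9*mu*y1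 + (-4)*x*x1*x2^7*a^10*b^11*y1 + 1*x*x1*x2^8*a^7*b^7*mu^3*y1^2 + (-1)*x*x1*x2^8*a^9*b^7*mu^2*y1^2 + 9*x*x1*x2^8*a^9*b^9*mu*y1^2 + (-4)*x*x1*x2^8*a^9*b^11*y1^2 + 12*x*x1^2*x2^5*a^6*b^10*mu^3 + 18*x*x1^2*x2^5*a^6*b^12*mu^2 + 4*x*x1^2*x2^5*a^8*b^6*mu^4 + 2*x*x1^2*x2^5*a^8*b^8*mu^3 + (-2)*x*x1^2*x2^5*a^8*b^10*mu^2 + 12*x*x1^2*x2^5*a^8*b^12*mu + (-6)*x*x1^2*x2^5*a^10*b^10*mu + 4*x*x1^2*x2^6*a^7*b^6*mu^4*y1 + (-10)*x*x1^2*x2^6*a^7*b^8*mu^3*y1 + (-14)*x*x1^2*x2^6*a^7*b^10*mu^2*y1 + 24*x*x1^2*x2^6*a^7*b^12*mu*y1 + 4*x*x1^2*x2^6*a^9*b^8*mu^2*y1 + (-14)*x*x1^2*x2^6*a^9*b^10*mu*y1 + 6*x*x1^2*x2^6*a^9*b^12*y1 + (-4)*x*x1^2*x2^7*a^6*b^8*mu^3*y1^2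 + 4*x*x1^2*x2^7*a^8*b^8*mu^2*y1^2 + (-16)*x*x1^2*x2^7*a^8*b^10*mu*y1^2 + 6*x*x1^2*x2^7*a^8*b^12*y1^2 + (-8)*x*x1^3*x2^4*a^5*b^11*mu^3 + (-12)*x*x1^3*x2^4*a^5*b^13*mu^2 + (-6)*x*x1^3*x2^4*a^7*b^7*mu^4 + (-8)*x*x1^3*x2^4*a^7*b^9*mu^3 + (-2)*x*x1^3*x2^4*a^7*b^11*mu^2 + (-8)*x*x1^3*x2^4*a^7*b^13*mu + 4*x*x1^3*x2^4*a^9*b^11*mu + (-6)*x*x1^3*x2^5*a^6*b^7*mu^4*y1 + 10*x*x1^3*x2^5*a^6*b^9*mu^3*y1 + 16*x*x1^3*x2^5*a^6*b^11*mu^2*y1 + (-16)*x*x1^3*x2^5*a^6*b^13*mu*y1 + (-6)*x*x1^3*x2^5*a^8*b^9*mu^2*y1 + 6*x*x1^3*x2^5*a^8*b^11*mu*y1 + (-4)*x*x1^3*x2^5*a^8*b^13*y1 + 6*x*x1^3*x2^6*a^5*b^9*mu^3*y1^2 + (-6)*x*x1^3*x2^6*a^7*b^9*mu^2*y1^2 +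 14*x*x1^3*x2^6*a^7*b^11*mu*y1^2 + (-4)*x*x1^3*x2^6*a^7*b^13*y1^2 + 2*x*x1^4*x2^3*a^4*b^12*mu^3 + 3*x*x1^4*x2^3*a^4*b^14*mu^2 + 4*x*x1^4*x2^3*a^6*b^8*mu^4 + 7*x*x1^4*x2^3*a^6*b^10*mu^3 + 3*x*x1^4*x2^3*a^6*b^12*mu^2 + 2*x*x1^4*x2^3*a^6*b^14*mu + (-1)*x*x1^4*x2^3*a^8*b^12*mu + 4*x*x1^4*x2^4*a^5*b^8*mu^4*y1 + (-5)*x*x1^4*x2^4*a^5*b^10*mu^3*y1 + (-9)*x*x1^4*x2^4*a^5*b^12*mu^2*y1 + 4*x*x1^4*x2^4*a^5*b^14*mu*y1 + 4*x*x1^4*x2^4*a^7*b^10*mu^2*y1 + 1*x*x1^4*x2^4*a^7*b^12*mu*y1 + 1*x*x1^4*x2^4*a^7*b^14*y1 + (-4)*x*x1^4*x2^5*a^4*b^10*mu^3*y1^2 + 4*x*x1^4*x2^5*a^6*b^10*mu^2*y1^2 + (-6)*x*x1^4*x2^5*a^6*b^12*mu*y1^2 + 1*x*x1^4*x2^5*a^6*b^14*y1^2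 + (-1)*x*x1^5*x2^2*a^5*b^9*mu^4 + (-2)*x*x1^5*x2^2*a^5*b^11*mu^3 + (-1)*x*x1^5*x2^2*a^5*b^13*mu^2 + (-1)*x*x1^5*x2^3*a^4*b^9*mu^4*y1 + 1*x*x1^5*x2^3*a^4*b^11*mu^3*y1 + 2*x*x1^5*x2^3*a^4*b^13*mu^2*y1 + (-1)*x*x1^5*x2^3*a^6*b^11*mu^2*y1 + (-1)*x*x1^5*x2^3*a^6*b^13*mu*y1 + 1*x*x1^5*x2^4*a^3*b^11*mu^3*y1^2 + (-1)*x*x1^5*x2^4*a^5*b^11*mu^2*y1^2 + 1*x*x1^5*x2^4*a^5*b^13*mu*y1^2 + 1*x^2*x2^8*a^8*b^7*mu^3 + 3*x^2*x2^8*a^8*b^9*mu^2 + (-1)*x^2*x2^8*a^10*b^7*mu^2 + 1*x^2*x2^8*a^10*b^9*mu + (-1)*x^2*x2^9*a^9*b^7*mu^2*y1 + 2*x^2*x2^9*a^9*b^9*mu*y1 + (-4)*x^2*x1*x2^7*a^7*b^8*mu^3 + (-12)*x^2*x1*x2^7*a^7*b^10*mu^2 + (-2)*x^2*x1*x2^7*a^9*b^6*mu^3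 + 2*x^2*x1*x2^7*a^9*b^8*mu^2 + (-4)*x^2*x1*x2^7*a^9*b^10*mu + (-1)*x^2*x1*x2^8*a^8*b^6*mu^3*y1 + 5*x^2*x1*x2^8*a^8*b^8*mu^2*y1 + (-8)*x^2*x1*x2^8*a^8*b^10*mu*y1 + (-1)*x^2*x1*x2^8*a^10*b^8*mu*y1 + 6*x^2*x1^2*x2^6*a^6*b^9*mu^3 + 18*x^2*x1^2*x2^6*a^6*b^11*mu^2 + 8*x^2*x1^2*x2^6*a^8*b^7*mu^3 + 2*x^2*x1^2*x2^6*a^8*b^9*mu^2 + 6*x^2*x1^2*x2^6*a^8*b^11*mu + 4*x^2*x1^2*x2^7*a^7*b^7*mu^3*y1 + (-10)*x^2*x1^2*x2^7*a^7*b^9*mu^2*y1 + 12*x^2*x1^2*x2^7*a^7*b^11*mu*y1 + 4*x^2*x1^2*x2^7*a^9*b^9*mu*y1 + (-4)*x^2*x1^3*x2^5*a^5*b^10*mu^3 + (-12)*x^2*x1^3*x2^5*a^5*b^12*mu^2 + (-12)*x^2*x1^3*x2^5*a^7*b^8*mu^3 + (-8)*x^2*x1^3*x2^5*a^7*b^10*mu^2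 + (-4)*x^2*x1^3*x2^5*a^7*b^12*mu + (-6)*x^2*x1^3*x2^6*a^6*b^8*mu^3*y1 + 10*x^2*x1^3*x2^6*a^6*b^10*mu^2*y1 + (-8)*x^2*x1^3*x2^6*a^6*b^12*mu*y1 + (-6)*x^2*x1^3*x2^6*a^8*b^10*mu*y1 + 1*x^2*x1^4*x2^4*a^4*b^11*mu^3 + 3*x^2*x1^4*x2^4*a^4*b^13*mu^2 + 8*x^2*x1^4*x2^4*a^6*b^9*mu^3 + 7*x^2*x1^4*x2^4*a^6*b^11*mu^2 + 1*x^2*x1^4*x2^4*a^6*b^13*mu + 4*x^2*x1^4*x2^5*a^5*b^9*mu^3*y1 + (-5)*x^2*x1^4*x2^5*a^5*b^11*mu^2*y1 + 2*x^2*x1^4*x2^5*a^5*b^13*mu*y1 + 4*x^2*x1^4*x2^5*a^7*b^11*mu*y1 + (-2)*x^2*x1^5*x2^3*a^5*b^10*mu^3 + (-2)*x^2*x1^5*x2^3*a^5*b^12*mu^2 + (-1)*x^2*x1^5*x2^4*a^4*b^10*mu^3*y1 + 1*x^2*x1^5*x2^4*a^4*b^12*mu^2*y1 + (-1)*x^2*x1^5*x2^4*a^6*b^12*mu*y1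 + 1*x^3*x2^9*a^8*b^8*mu^2 + (-4)*x^3*x1*x2^8*a^7*b^9*mu^2 + (-1)*x^3*x1*x2^8*a^9*b^7*mu^2 + 6*x^3*x1^2*x2^7*a^6*b^10*mu^2 + 4*x^3*x1^2*x2^7*a^8*b^8*mu^2 + (-4)*x^3*x1^3*x2^6*a^5*b^11*mu^2 + (-6)*x^3*x1^3*x2^6*a^7*b^9*mu^2 + 1*x^3*x1^4*x2^5*a^4*b^12*mu^2 + 4*x^3*x1^4*x2^5*a^6*b^10*mu^2 + (-1)*x^3*x1^5*x2^4*a^5*b^11*mu^2) * E2 + ((-1)*x1*x2^6*a^8*b^6*mu^4*y1 + (-1)*x1*x2^6*a^9*b^9*mu^2*y2 + (-1)*x1*x2^6*a^10*b^6*mu^3*y1 + 2*x1*x2^6*a^10*b^8*mu^2*y1 + 1*x1*x2^6*a^10*b^10*mu*y1 + 1*x1*x2^6*a^11*b^7*mu^2*y2 + (-1)*x1*x2^6*a^11*b^9*mu*y2 + (-1)*x1*x2^6*a^12*b^6*mu^2*y1 + 1*x1*x2^6*a^13*b^7*mu*y2 + (-1)*x1*x2^7*a^7*b^6*mu^4*y1^2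 + 1*x1*x2^7*a^9*b^6*mu^3*y3^2 + (-1)*x1*x2^7*a^9*b^6*mu^3*y2*y3 + (-1)*x1*x2^7*a^9*b^6*mu^3*y1^2 + 1*x1*x2^7*a^9*b^8*mu^2*y2*y3 + 2*x1*x2^7*a^9*b^8*mu^2*y1^2 + 1*x1*x2^7*a^10*b^5*mu^3*y1*y3 + (-1)*x1*x2^7*a^10*b^7*mu^2*y1*y3 + 2*x1*x2^7*a^10*b^7*mu^2*y1*y2 + (-1)*x1*x2^7*a^10*b^9*mu*y1*y3 + (-2)*x1*x2^7*a^10*b^9*mu*y1*y2 + (-1)*x1*x2^7*a^11*b^6*mu^2*y2*y3 + (-3)*x1*x2^7*a^11*b^6*mu^2*y1^2 + (-1)*x1*x2^7*a^11*b^8*mu*y3^2 + 1*x1*x2^7*a^11*b^8*mu*y2*y3 + 1*x1*x2^7*a^11*b^10*y1^2 + 3*x1*x2^7*a^12*b^7*mu*y1*y2 + 1*x1*x2^7*a^12*b^9*y1*y3 + (-1)*x1*x2^7*a^12*b^9*y1*y2 + 1*x1*x2^8*a^8*b^6*mu^3*y1*y3^2 + 1*x1*x2^8*a^9*b^5*mu^3*y1^2*y3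 + (-1)*x1*x2^8*a^9*b^7*mu^2*y2*y3^2 + (-2)*x1*x2^8*a^9*b^7*mu^2*y1^2*y3 + (-1)*x1*x2^8*a^10*b^6*mu^2*y1*y2*y3 + (-2)*x1*x2^8*a^10*b^6*mu^2*y1^3 + 2*x1*x2^8*a^10*b^8*mu*y1*y2*y3 + 1*x1*x2^8*a^10*b^8*mu*y1^3 + 2*x1*x2^8*a^11*b^7*mu*y1^2*y2 + (-1)*x1*x2^8*a^11*b^9*y1^2*y2 + 4*x1^2*x2^5*a^7*b^7*mu^4*y1 + 4*x1^2*x2^5*a^8*b^10*mu^2*y2 + 4*x1^2*x2^5*a^9*b^7*mu^3*y1 + (-8)*x1^2*x2^5*a^9*b^9*mu^2*y1 + (-4)*x1^2*x2^5*a^9*b^11*mu*y1 + (-4)*x1^2*x2^5*a^10*b^8*mu^2*y2 + 4*x1^2*x2^5*a^10*b^10*mu*y2 + 4*x1^2*x2^5*a^11*b^7*mu^2*y1 + (-4)*x1^2*x2^5*a^12*b^8*mu*y2 + 4*x1^2*x2^6*a^6*b^7*mu^4*y1^2 + (-4)*x1^2*x2^6*a^8*b^7*mu^3*y3^2 + 4*x1^2*x2^6*a^8*b^7*mu^3*y2*y3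 + 4*x1^2*x2^6*a^8*b^7*mu^3*y1^2 + (-4)*x1^2*x2^6*a^8*b^9*mu^2*y2*y3 + (-8)*x1^2*x2^6*a^8*b^9*mu^2*y1^2 + (-4)*x1^2*x2^6*a^9*b^6*mu^3*y1*y3 + (-1)*x1^2*x2^6*a^9*b^6*mu^3*y1*y2 + 4*x1^2*x2^6*a^9*b^8*mu^2*y1*y3 + (-9)*x1^2*x2^6*a^9*b^8*mu^2*y1*y2 + 4*x1^2*x2^6*a^9*b^10*mu*y1*y3 + 8*x1^2*x2^6*a^9*b^10*mu*y1*y2 + 4*x1^2*x2^6*a^10*b^7*mu^2*y2*y3 + 13*x1^2*x2^6*a^10*b^7*mu^2*y1^2 + 4*x1^2*x2^6*a^10*b^9*mu*y3^2 + (-4)*x1^2*x2^6*a^10*b^9*mu*y2*y3 + 1*x1^2*x2^6*a^10*b^9*mu*y1^2 + (-4)*x1^2*x2^6*a^10*b^11*y1^2 + (-12)*x1^2*x2^6*a^11*b^8*mu*y1*y2 + (-4)*x1^2*x2^6*a^11*b^10*y1*y3 + 4*x1^2*x2^6*a^11*b^10*y1*y2 + (-4)*x1^2*x2^7*a^7*b^7*mu^3*y1*y3^2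 + (-4)*x1^2*x2^7*a^8*b^6*mu^3*y1^2*y3 + (-1)*x1^2*x2^7*a^8*b^6*mu^3*y1^2*y2 + 4*x1^2*x2^7*a^8*b^8*mu^2*y2*y3^2 + 8*x1^2*x2^7*a^8*b^8*mu^2*y1^2*y3 + (-1)*x1^2*x2^7*a^9*b^5*mu^3*y1*y2*y3 + 5*x1^2*x2^7*a^9*b^7*mu^2*y1*y2*y3 + 9*x1^2*x2^7*a^9*b^7*mu^2*y1^3 + (-8)*x1^2*x2^7*a^9*b^9*mu*y1*y2*y3 + (-4)*x1^2*x2^7*a^9*b^9*mu*y1^3 + 1*x1^2*x2^7*a^10*b^6*mu^2*y2*y3^2 + 1*x1^2*x2^7*a^10*b^6*mu^2*y1^2*y3 + 1*x1^2*x2^7*a^10*b^6*mu^2*y1^2*y2 + (-1)*x1^2*x2^7*a^10*b^8*mu*y1^2*y3 + (-9)*x1^2*x2^7*a^10*b^8*mu*y1^2*y2 + 4*x1^2*x2^7*a^10*b^10*y1^2*y2 + (-1)*x1^2*x2^7*a^11*b^7*mu*y1*y3^2 + (-1)*x1^2*x2^7*a^11*b^7*mu*y1*y2*y3 + (-1)*x1^2*x2^7*a^11*b^7*mu*y1^3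 + 1*x1^2*x2^7*a^11*b^9*y1^3 + 1*x1^2*x2^7*a^12*b^8*y1^2*y3 + (-6)*x1^3*x2^4*a^6*b^8*mu^4*y1 + (-6)*x1^3*x2^4*a^7*b^11*mu^2*y2 + (-6)*x1^3*x2^4*a^8*b^8*mu^3*y1 + 12*x1^3*x2^4*a^8*b^10*mu^2*y1 + 6*x1^3*x2^4*a^8*b^12*mu*y1 + 6*x1^3*x2^4*a^9*b^9*mu^2*y2 + (-6)*x1^3*x2^4*a^9*b^11*mu*y2 + (-6)*x1^3*x2^4*a^10*b^8*mu^2*y1 + 6*x1^3*x2^4*a^11*b^9*mu*y2 + (-6)*x1^3*x2^5*a^5*b^8*mu^4*y1^2 + 6*x1^3*x2^5*a^7*b^8*mu^3*y3^2 + (-6)*x1^3*x2^5*a^7*b^8*mu^3*y2*y3 + (-6)*x1^3*x2^5*a^7*b^8*mu^3*y1^2 + 6*x1^3*x2^5*a^7*b^10*mu^2*y2*y3 + 12*x1^3*x2^5*a^7*b^10*mu^2*y1^2 + 6*x1^3*x2^5*a^8*b^7*mu^3*y1*y3 + 4*x1^3*x2^5*a^8*b^7*mu^3*y1*y2 + (-6)*x1^3*x2^5*a^8*b^9*mu^2*y1*y3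 + 16*x1^3*x2^5*a^8*b^9*mu^2*y1*y2 + (-6)*x1^3*x2^5*a^8*b^11*mu*y1*y3 + (-12)*x1^3*x2^5*a^8*b^11*mu*y1*y2 + (-6)*x1^3*x2^5*a^9*b^8*mu^2*y2*y3 + (-22)*x1^3*x2^5*a^9*b^8*mu^2*y1^2 + (-6)*x1^3*x2^5*a^9*b^10*mu*y3^2 + 6*x1^3*x2^5*a^9*b^10*mu*y2*y3 + (-4)*x1^3*x2^5*a^9*b^10*mu*y1^2 + 6*x1^3*x2^5*a^9*b^12*y1^2 + 18*x1^3*x2^5*a^10*b^9*mu*y1*y2 + 6*x1^3*x2^5*a^10*b^11*y1*y3 + (-6)*x1^3*x2^5*a^10*b^11*y1*y2 + 6*x1^3*x2^6*a^6*b^8*mu^3*y1*y3^2 + 6*x1^3*x2^6*a^7*b^7*mu^3*y1^2*y3 + 4*x1^3*x2^6*a^7*b^7*mu^3*y1^2*y2 + (-6)*x1^3*x2^6*a^7*b^9*mu^2*y2*y3^2 + (-12)*x1^3*x2^6*a^7*b^9*mu^2*y1^2*y3 + 4*x1^3*x2^6*a^8*b^6*mu^3*y1*y2*y3 + (-10)*x1^3*x2^6*a^8*b^8*mu^2*y1*y2*y3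 + (-16)*x1^3*x2^6*a^8*b^8*mu^2*y1^3 + 12*x1^3*x2^6*a^8*b^10*mu*y1*y2*y3 + 6*x1^3*x2^6*a^8*b^10*mu*y1^3 + (-4)*x1^3*x2^6*a^9*b^7*mu^2*y2*y3^2 + (-4)*x1^3*x2^6*a^9*b^7*mu^2*y1^2*y3 + (-4)*x1^3*x2^6*a^9*b^7*mu^2*y1^2*y2 + 4*x1^3*x2^6*a^9*b^9*mu*y1^2*y3 + 16*x1^3*x2^6*a^9*b^9*mu*y1^2*y2 + (-6)*x1^3*x2^6*a^9*b^11*y1^2*y2 + 4*x1^3*x2^6*a^10*b^8*mu*y1*y3^2 + 4*x1^3*x2^6*a^10*b^8*mu*y1*y2*y3 + 4*x1^3*x2^6*a^10*b^8*mu*y1^3 + (-4)*x1^3*x2^6*a^10*b^10*y1^3 + (-4)*x1^3*x2^6*a^11*b^9*y1^2*y3 + 4*x1^4*x2^3*a^5*b^9*mu^4*y1 + 4*x1^4*x2^3*a^6*b^12*mu^2*y2 + 4*x1^4*x2^3*a^7*b^9*mu^3*y1 + (-8)*x1^4*x2^3*a^7*b^11*mu^2*y1 + (-4)*x1^4*x2^3*a^7*b^13*mu*y1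 + (-4)*x1^4*x2^3*a^8*b^10*mu^2*y2 + 4*x1^4*x2^3*a^8*b^12*mu*y2 + 4*x1^4*x2^3*a^9*b^9*mu^2*y1 + (-4)*x1^4*x2^3*a^10*b^10*mu*y2 + 4*x1^4*x2^4*a^4*b^9*mu^4*y1^2 + (-4)*x1^4*x2^4*a^6*b^9*mu^3*y3^2 + 4*x1^4*x2^4*a^6*b^9*mu^3*y2*y3 + 4*x1^4*x2^4*a^6*b^9*mu^3*y1^2 + (-4)*x1^4*x2^4*a^6*b^11*mu^2*y2*y3 + (-8)*x1^4*x2^4*a^6*b^11*mu^2*y1^2 + (-4)*x1^4*x2^4*a^7*b^8*mu^3*y1*y3 + (-6)*x1^4*x2^4*a^7*b^8*mu^3*y1*y2 + 4*x1^4*x2^4*a^7*b^10*mu^2*y1*y3 + (-14)*x1^4*x2^4*a^7*b^10*mu^2*y1*y2 + 4*x1^4*x2^4*a^7*b^12*mu*y1*y3 + 8*x1^4*x2^4*a^7*b^12*mu*y1*y2 + 4*x1^4*x2^4*a^8*b^9*mu^2*y2*y3 + 18*x1^4*x2^4*a^8*b^9*mu^2*y1^2 + 4*x1^4*x2^4*a^8*b^11*mu*y3^2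 + (-4)*x1^4*x2^4*a^8*b^11*mu*y2*y3 + 6*x1^4*x2^4*a^8*b^11*mu*y1^2 + (-4)*x1^4*x2^4*a^8*b^13*y1^2 + (-12)*x1^4*x2^4*a^9*b^10*mu*y1*y2 + (-4)*x1^4*x2^4*a^9*b^12*y1*y3 + 4*x1^4*x2^4*a^9*b^12*y1*y2 + (-4)*x1^4*x2^5*a^5*b^9*mu^3*y1*y3^2 + (-4)*x1^4*x2^5*a^6*b^8*mu^3*y1^2*y3 + (-6)*x1^4*x2^5*a^6*b^8*mu^3*y1^2*y2 + 4*x1^4*x2^5*a^6*b^10*mu^2*y2*y3^2 + 8*x1^4*x2^5*a^6*b^10*mu^2*y1^2*y3 + (-6)*x1^4*x2^5*a^7*b^7*mu^3*y1*y2*y3 + 10*x1^4*x2^5*a^7*b^9*mu^2*y1*y2*y3 + 14*x1^4*x2^5*a^7*b^9*mu^2*y1^3 + (-8)*x1^4*x2^5*a^7*b^11*mu*y1*y2*y3 + (-4)*x1^4*x2^5*a^7*b^11*mu*y1^3 + 6*x1^4*x2^5*a^8*b^8*mu^2*y2*y3^2 + 6*x1^4*x2^5*a^8*b^8*mu^2*y1^2*y3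 + 6*x1^4*x2^5*a^8*b^8*mu^2*y1^2*y2 + (-6)*x1^4*x2^5*a^8*b^10*mu*y1^2*y3 + (-14)*x1^4*x2^5*a^8*b^10*mu*y1^2*y2 + 4*x1^4*x2^5*a^8*b^12*y1^2*y2 + (-6)*x1^4*x2^5*a^9*b^9*mu*y1*y3^2 + (-6)*x1^4*x2^5*a^9*b^9*mu*y1*y2*y3 + (-6)*x1^4*x2^5*a^9*b^9*mu*y1^3 + 6*x1^4*x2^5*a^9*b^11*y1^3 + 6*x1^4*x2^5*a^10*b^10*y1^2*y3 + (-1)*x1^5*x2^2*a^4*b^10*mu^4*y1 + (-1)*x1^5*x2^2*a^5*b^13*mu^2*y2 + (-1)*x1^5*x2^2*a^6*b^10*mu^3*y1 + 2*x1^5*x2^2*a^6*b^12*mu^2*y1 + 1*x1^5*x2^2*a^6*b^14*mu*y1 + 1*x1^5*x2^2*a^7*b^11*mu^2*y2 + (-1)*x1^5*x2^2*a^7*b^13*mu*y2 + (-1)*x1^5*x2^2*a^8*b^10*mu^2*y1 + 1*x1^5*x2^2*a^9*b^11*mu*y2 + (-1)*x1^5*x2^3*a^3*b^10*mu^4*y1^2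 + 1*x1^5*x2^3*a^5*b^10*mu^3*y3^2 + (-1)*x1^5*x2^3*a^5*b^10*mu^3*y2*y3 + (-1)*x1^5*x2^3*a^5*b^10*mu^3*y1^2 + 1*x1^5*x2^3*a^5*b^12*mu^2*y2*y3 + 2*x1^5*x2^3*a^5*b^12*mu^2*y1^2 + 1*x1^5*x2^3*a^6*b^9*mu^3*y1*y3 + 4*x1^5*x2^3*a^6*b^9*mu^3*y1*y2 + (-1)*x1^5*x2^3*a^6*b^11*mu^2*y1*y3 + 6*x1^5*x2^3*a^6*b^11*mu^2*y1*y2 + (-1)*x1^5*x2^3*a^6*b^13*mu*y1*y3 + (-2)*x1^5*x2^3*a^6*b^13*mu*y1*y2 + (-1)*x1^5*x2^3*a^7*b^10*mu^2*y2*y3 + (-7)*x1^5*x2^3*a^7*b^10*mu^2*y1^2 + (-1)*x1^5*x2^3*a^7*b^12*mu*y3^2 + 1*x1^5*x2^3*a^7*b^12*mu*y2*y3 + (-4)*x1^5*x2^3*a^7*b^12*mu*y1^2 + 1*x1^5*x2^3*a^7*b^14*y1^2 + 3*x1^5*x2^3*a^8*b^11*mu*y1*y2 + 1*x1^5*x2^3*a^8*b^13*y1*y3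 + (-1)*x1^5*x2^3*a^8*b^13*y1*y2 + 1*x1^5*x2^4*a^4*b^10*mu^3*y1*y3^2 + 1*x1^5*x2^4*a^5*b^9*mu^3*y1^2*y3 + 4*x1^5*x2^4*a^5*b^9*mu^3*y1^2*y2 + (-1)*x1^5*x2^4*a^5*b^11*mu^2*y2*y3^2 + (-2)*x1^5*x2^4*a^5*b^11*mu^2*y1^2*y3 + 4*x1^5*x2^4*a^6*b^8*mu^3*y1*y2*y3 + (-5)*x1^5*x2^4*a^6*b^10*mu^2*y1*y2*y3 + (-6)*x1^5*x2^4*a^6*b^10*mu^2*y1^3 + 2*x1^5*x2^4*a^6*b^12*mu*y1*y2*y3 + 1*x1^5*x2^4*a^6*b^12*mu*y1^3 + (-4)*x1^5*x2^4*a^7*b^9*mu^2*y2*y3^2 + (-4)*x1^5*x2^4*a^7*b^9*mu^2*y1^2*y3 + (-4)*x1^5*x2^4*a^7*b^9*mu^2*y1^2*y2 + 4*x1^5*x2^4*a^7*b^11*mu*y1^2*y3 + 6*x1^5*x2^4*a^7*b^11*mu*y1^2*y2 + (-1)*x1^5*x2^4*a^7*b^13*y1^2*y2 + 4*x1^5*x2^4*a^8*b^10*mu*y1*y3^2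 + 4*x1^5*x2^4*a^8*b^10*mu*y1*y2*y3 + 4*x1^5*x2^4*a^8*b^10*mu*y1^3 + (-4)*x1^5*x2^4*a^8*b^12*y1^3 + (-4)*x1^5*x2^4*a^9*b^11*y1^2*y3 + (-1)*x1^6*x2^2*a^5*b^10*mu^3*y1*y2 + (-1)*x1^6*x2^2*a^5*b^12*mu^2*y1*y2 + 1*x1^6*x2^2*a^6*b^11*mu^2*y1^2 + 1*x1^6*x2^2*a^6*b^13*mu*y1^2 + (-1)*x1^6*x2^3*a^4*b^10*mu^3*y1^2*y2 + (-1)*x1^6*x2^3*a^5*b^9*mu^3*y1*y2*y3 + 1*x1^6*x2^3*a^5*b^11*mu^2*y1*y2*y3 + 1*x1^6*x2^3*a^5*b^11*mu^2*y1^3 + 1*x1^6*x2^3*a^6*b^10*mu^2*y2*y3^2 + 1*x1^6*x2^3*a^6*b^10*mu^2*y1^2*y3 + 1*x1^6*x2^3*a^6*b^10*mu^2*y1^2*y2 + (-1)*x1^6*x2^3*a^6*b^12*mu*y1^2*y3 + (-1)*x1^6*x2^3*a^6*b^12*mu*y1^2*y2 + (-1)*x1^6*x2^3*a^7*b^11*mu*y1*y3^2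 + (-1)*x1^6*x2^3*a^7*b^11*mu*y1*y2*y3 + (-1)*x1^6*x2^3*a^7*b^11*mu*y1^3 + 1*x1^6*x2^3*a^7*b^13*y1^3 + 1*x1^6*x2^3*a^8*b^12*y1^2*y3 + 1*x*x1*x2^6*a^9*b^5*mu^4 + 1*x*x1*x2^6*a^9*b^7*mu^3 + (-1)*x*x1*x2^6*a^11*b^7*mu^2 + (-1)*x*x1*x2^6*a^11*b^9*mu + 1*x*x1*x2^7*a^8*b^5*mu^4*y1 + 1*x*x1*x2^7*a^8*b^7*mu^3*y1 + (-1)*x*x1*x2^7*a^9*b^6*mu^3*y3 + (-2)*x*x1*x2^7*a^9*b^8*mu^2*y2 + (-1)*x*x1*x2^7*a^10*b^5*mu^3*y1 + 1*x*x1*x2^7*a^10*b^7*mu^2*y1 + 1*x*x1*x2^7*a^10*b^9*mu*y1 + 1*x*x1*x2^7*a^11*b^6*mu^2*y2 + 1*x*x1*x2^7*a^11*b^8*mu*y3 + (-1)*x*x1*x2^7*a^11*b^8*mu*y2 + (-1)*x*x1*x2^7*a^12*b^9*y1 + (-1)*x*x1*x2^8*a^8*b^6*mu^3*y1*y3 +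 (-1)*x*x1*x2^8*a^9*b^5*mu^3*y1^2 + 1*x*x1*x2^8*a^9*b^7*mu^2*y2*y3 + 2*x*x1*x2^8*a^9*b^7*mu^2*y1^2 + 1*x*x1*x2^8*a^10*b^6*mu^2*y1*y2 + (-2)*x*x1*x2^8*a^10*b^8*mu*y1*y2 + (-4)*x*x1^2*x2^5*a^8*b^6*mu^4 + (-4)*x*x1^2*x2^5*a^8*b^8*mu^3 + 4*x*x1^2*x2^5*a^10*b^8*mu^2 + 4*x*x1^2*x2^5*a^10*b^10*mu + (-4)*x*x1^2*x2^6*a^7*b^6*mu^4*y1 + (-4)*x*x1^2*x2^6*a^7*b^8*mu^3*y1 + 4*x*x1^2*x2^6*a^8*b^7*mu^3*y3 + 8*x*x1^2*x2^6*a^8*b^9*mu^2*y2 + 4*x*x1^2*x2^6*a^9*b^6*mu^3*y1 + (-4)*x*x1^2*x2^6*a^9*b^8*mu^2*y1 + (-4)*x*x1^2*x2^6*a^9*b^10*mu*y1 + 1*x*x1^2*x2^6*a^10*b^5*mu^3*y2 + (-3)*x*x1^2*x2^6*a^10*b^7*mu^2*y2 + (-4)*x*x1^2*x2^6*a^10*b^9*mu*y3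 + 4*x*x1^2*x2^6*a^10*b^9*mu*y2 + (-1)*x*x1^2*x2^6*a^11*b^6*mu^2*y1 + (-1)*x*x1^2*x2^6*a^11*b^8*mu*y1 + 4*x*x1^2*x2^6*a^11*b^10*y1 + 4*x*x1^2*x2^7*a^7*b^7*mu^3*y1*y3 + 4*x*x1^2*x2^7*a^8*b^6*mu^3*y1^2 + (-4)*x*x1^2*x2^7*a^8*b^8*mu^2*y2*y3 + (-8)*x*x1^2*x2^7*a^8*b^8*mu^2*y1^2 + 1*x*x1^2*x2^7*a^9*b^5*mu^3*y1*y2 + (-5)*x*x1^2*x2^7*a^9*b^7*mu^2*y1*y2 + 8*x*x1^2*x2^7*a^9*b^9*mu*y1*y2 + (-1)*x*x1^2*x2^7*a^10*b^6*mu^2*y2*y3 + (-1)*x*x1^2*x2^7*a^10*b^6*mu^2*y1^2 + 1*x*x1^2*x2^7*a^10*b^8*mu*y1^2 + 1*x*x1^2*x2^7*a^11*b^7*mu*y1*y3 + 1*x*x1^2*x2^7*a^11*b^7*mu*y1*y2 + (-1)*x*x1^2*x2^7*a^12*b^8*y1^2 + 6*x*x1^3*x2^4*a^7*b^7*mu^4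 + 6*x*x1^3*x2^4*a^7*b^9*mu^3 + (-6)*x*x1^3*x2^4*a^9*b^9*mu^2 + (-6)*x*x1^3*x2^4*a^9*b^11*mu + 6*x*x1^3*x2^5*a^6*b^7*mu^4*y1 + 6*x*x1^3*x2^5*a^6*b^9*mu^3*y1 + (-6)*x*x1^3*x2^5*a^7*b^8*mu^3*y3 + (-12)*x*x1^3*x2^5*a^7*b^10*mu^2*y2 + (-6)*x*x1^3*x2^5*a^8*b^7*mu^3*y1 + 6*x*x1^3*x2^5*a^8*b^9*mu^2*y1 + 6*x*x1^3*x2^5*a^8*b^11*mu*y1 + (-4)*x*x1^3*x2^5*a^9*b^6*mu^3*y2 + 2*x*x1^3*x2^5*a^9*b^8*mu^2*y2 + 6*x*x1^3*x2^5*a^9*b^10*mu*y3 + (-6)*x*x1^3*x2^5*a^9*b^10*mu*y2 + 4*x*x1^3*x2^5*a^10*b^7*mu^2*y1 + 4*x*x1^3*x2^5*a^10*b^9*mu*y1 + (-6)*x*x1^3*x2^5*a^10*b^11*y1 + (-6)*x*x1^3*x2^6*a^6*b^8*mu^3*y1*y3 + (-6)*x*x1^3*x2^6*a^7*b^7*mu^3*y1^2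 + 6*x*x1^3*x2^6*a^7*b^9*mu^2*y2*y3 + 12*x*x1^3*x2^6*a^7*b^9*mu^2*y1^2 + (-4)*x*x1^3*x2^6*a^8*b^6*mu^3*y1*y2 + 10*x*x1^3*x2^6*a^8*b^8*mu^2*y1*y2 + (-12)*x*x1^3*x2^6*a^8*b^10*mu*y1*y2 + 4*x*x1^3*x2^6*a^9*b^7*mu^2*y2*y3 + 4*x*x1^3*x2^6*a^9*b^7*mu^2*y1^2 + (-4)*x*x1^3*x2^6*a^9*b^9*mu*y1^2 + (-4)*x*x1^3*x2^6*a^10*b^8*mu*y1*y3 + (-4)*x*x1^3*x2^6*a^10*b^8*mu*y1*y2 + 4*x*x1^3*x2^6*a^11*b^9*y1^2 + (-4)*x*x1^4*x2^3*a^6*b^8*mu^4 + (-4)*x*x1^4*x2^3*a^6*b^10*mu^3 + 4*x*x1^4*x2^3*a^8*b^10*mu^2 + 4*x*x1^4*x2^3*a^8*b^12*mu + (-4)*x*x1^4*x2^4*a^5*b^8*mu^4*y1 + (-4)*x*x1^4*x2^4*a^5*b^10*mu^3*y1 + 4*x*x1^4*x2^4*a^6*b^9*mu^3*y3 + 8*x*x1^4*x2^4*a^6*b^11*mu^2*y2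 + 4*x*x1^4*x2^4*a^7*b^8*mu^3*y1 + (-4)*x*x1^4*x2^4*a^7*b^10*mu^2*y1 + (-4)*x*x1^4*x2^4*a^7*b^12*mu*y1 + 6*x*x1^4*x2^4*a^8*b^7*mu^3*y2 + 2*x*x1^4*x2^4*a^8*b^9*mu^2*y2 + (-4)*x*x1^4*x2^4*a^8*b^11*mu*y3 + 4*x*x1^4*x2^4*a^8*b^11*mu*y2 + (-6)*x*x1^4*x2^4*a^9*b^8*mu^2*y1 + (-6)*x*x1^4*x2^4*a^9*b^10*mu*y1 + 4*x*x1^4*x2^4*a^9*b^12*y1 + 4*x*x1^4*x2^5*a^5*b^9*mu^3*y1*y3 + 4*x*x1^4*x2^5*a^6*b^8*mu^3*y1^2 + (-4)*x*x1^4*x2^5*a^6*b^10*mu^2*y2*y3 + (-8)*x*x1^4*x2^5*a^6*b^10*mu^2*y1^2 + 6*x*x1^4*x2^5*a^7*b^7*mu^3*y1*y2 + (-10)*x*x1^4*x2^5*a^7*b^9*mu^2*y1*y2 + 8*x*x1^4*x2^5*a^7*b^11*mu*y1*y2 + (-6)*x*x1^4*x2^5*a^8*b^8*mu^2*y2*y3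 + (-6)*x*x1^4*x2^5*a^8*b^8*mu^2*y1^2 + 6*x*x1^4*x2^5*a^8*b^10*mu*y1^2 + 6*x*x1^4*x2^5*a^9*b^9*mu*y1*y3 + 6*x*x1^4*x2^5*a^9*b^9*mu*y1*y2 + (-6)*x*x1^4*x2^5*a^10*b^10*y1^2 + 1*x*x1^5*x2^2*a^5*b^9*mu^4 + 1*x*x1^5*x2^2*a^5*b^11*mu^3 + (-1)*x*x1^5*x2^2*a^7*b^11*mu^2 + (-1)*x*x1^5*x2^2*a^7*b^13*mu + 1*x*x1^5*x2^3*a^4*b^9*mu^4*y1 + 1*x*x1^5*x2^3*a^4*b^11*mu^3*y1 + (-1)*x*x1^5*x2^3*a^5*b^10*mu^3*y3 + (-2)*x*x1^5*x2^3*a^5*b^12*mu^2*y2 + (-1)*x*x1^5*x2^3*a^6*b^9*mu^3*y1 + 1*x*x1^5*x2^3*a^6*b^11*mu^2*y1 + 1*x*x1^5*x2^3*a^6*b^13*mu*y1 + (-4)*x*x1^5*x2^3*a^7*b^8*mu^3*y2 + (-3)*x*x1^5*x2^3*a^7*b^10*mu^2*y2 + 1*x*x1^5*x2^3*a^7*b^12*mu*y3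 + (-1)*x*x1^5*x2^3*a^7*b^12*mu*y2 + 4*x*x1^5*x2^3*a^8*b^9*mu^2*y1 + 4*x*x1^5*x2^3*a^8*b^11*mu*y1 + (-1)*x*x1^5*x2^3*a^8*b^13*y1 + (-1)*x*x1^5*x2^4*a^4*b^10*mu^3*y1*y3 + (-1)*x*x1^5*x2^4*a^5*b^9*mu^3*y1^2 + 1*x*x1^5*x2^4*a^5*b^11*mu^2*y2*y3 + 2*x*x1^5*x2^4*a^5*b^11*mu^2*y1^2 + (-4)*x*x1^5*x2^4*a^6*b^8*mu^3*y1*y2 + 5*x*x1^5*x2^4*a^6*b^10*mu^2*y1*y2 + (-2)*x*x1^5*x2^4*a^6*b^12*mu*y1*y2 + 4*x*x1^5*x2^4*a^7*b^9*mu^2*y2*y3 + 4*x*x1^5*x2^4*a^7*b^9*mu^2*y1^2 + (-4)*x*x1^5*x2^4*a^7*b^11*mu*y1^2 + (-4)*x*x1^5*x2^4*a^8*b^10*mu*y1*y3 + (-4)*x*x1^5*x2^4*a^8*b^10*mu*y1*y2 + 4*x*x1^5*x2^4*a^9*b^11*y1^2 + 1*x*x1^6*x2^2*a^6*b^9*mu^3*y2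 + 1*x*x1^6*x2^2*a^6*b^11*mu^2*y2 + (-1)*x*x1^6*x2^2*a^7*b^10*mu^2*y1 + (-1)*x*x1^6*x2^2*a^7*b^12*mu*y1 + 1*x*x1^6*x2^3*a^5*b^9*mu^3*y1*y2 + (-1)*x*x1^6*x2^3*a^5*b^11*mu^2*y1*y2 + (-1)*x*x1^6*x2^3*a^6*b^10*mu^2*y2*y3 + (-1)*x*x1^6*x2^3*a^6*b^10*mu^2*y1^2 + 1*x*x1^6*x2^3*a^6*b^12*mu*y1^2 + 1*x*x1^6*x2^3*a^7*b^11*mu*y1*y3 + 1*x*x1^6*x2^3*a^7*b^11*mu*y1*y2 + (-1)*x*x1^6*x2^3*a^8*b^12*y1^2 + 1*x^2*x1*x2^7*a^9*b^6*mu^3 + (-1)*x^2*x1*x2^7*a^11*b^8*mu + 1*x^2*x1*x2^8*a^8*b^6*mu^3*y1 + (-1)*x^2*x1*x2^8*a^9*b^7*mu^2*y2 + (-4)*x^2*x1^2*x2^6*a^8*b^7*mu^3 + 4*x^2*x1^2*x2^6*a^10*b^9*mu + (-4)*x^2*x1^2*x2^7*a^7*b^7*mu^3*y1 + 4*x^2*x1^2*x2^7*a^8*b^8*mu^2*y2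 + 1*x^2*x1^2*x2^7*a^10*b^6*mu^2*y2 + (-1)*x^2*x1^2*x2^7*a^11*b^7*mu*y1 + 6*x^2*x1^3*x2^5*a^7*b^8*mu^3 + (-6)*x^2*x1^3*x2^5*a^9*b^10*mu + 6*x^2*x1^3*x2^6*a^6*b^8*mu^3*y1 + (-6)*x^2*x1^3*x2^6*a^7*b^9*mu^2*y2 + (-4)*x^2*x1^3*x2^6*a^9*b^7*mu^2*y2 + 4*x^2*x1^3*x2^6*a^10*b^8*mu*y1 + (-4)*x^2*x1^4*x2^4*a^6*b^9*mu^3 + 4*x^2*x1^4*x2^4*a^8*b^11*mu + (-4)*x^2*x1^4*x2^5*a^5*b^9*mu^3*y1 + 4*x^2*x1^4*x2^5*a^6*b^10*mu^2*y2 + 6*x^2*x1^4*x2^5*a^8*b^8*mu^2*y2 + (-6)*x^2*x1^4*x2^5*a^9*b^9*mu*y1 + 1*x^2*x1^5*x2^3*a^5*b^10*mu^3 + (-1)*x^2*x1^5*x2^3*a^7*b^12*mu + 1*x^2*x1^5*x2^4*a^4*b^10*mu^3*y1 + (-1)*x^2*x1^5*x2^4*a^5*b^11*mu^2*y2 + (-4)*x^2*x1^5*x2^4*a^7*b^9*mu^2*y2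 + 4*x^2*x1^5*x2^4*a^8*b^10*mu*y1 + 1*x^2*x1^6*x2^3*a^6*b^10*mu^2*y2 + (-1)*x^2*x1^6*x2^3*a^7*b^11*mu*y1) * E3 + (1*x1*x2^7*a^7*b^6*mu^3*y1^2 + 1*x1*x2^7*a^8*b^6*mu^2*y1^2*y3*z1 + (-1)*x1*x2^7*a^8*b^7*mu^2*y1*y3 + 1*x1*x2^7*a^9*b^5*mu^2*y1^3*z1 + (-1)*x1*x2^7*a^9*b^6*mu^2*y3^2 + 1*x1*x2^7*a^9*b^6*mu^2*y2*y3 + 1*x1*x2^7*a^9*b^6*mu^2*y1^2 + (-1)*x1*x2^7*a^9*b^7*mu*y1*y3^2*z1 + (-1)*x1*x2^7*a^9*b^7*mu*y1*y2*y3*z1 + (-1)*x1*x2^7*a^9*b^8*mu*y1^2 + (-1)*x1*x2^7*a^10*b^5*mu^2*y1*y3 + (-1)*x1*x2^7*a^10*b^6*mu*y1^2*y3*z1 + (-1)*x1*x2^7*a^10*b^6*mu*y1^2*y2*z1 + (-1)*x1*x2^7*a^10*b^7*mu*y1*y3 + (-1)*x1*x2^7*a^10*b^7*mu*y1*y2 +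 1*x1*x2^7*a^10*b^8*y2*y3^2*z1 + 1*x1*x2^7*a^10*b^9*y1*y3 + 1*x1*x2^7*a^11*b^6*mu*y2*y3 + 1*x1*x2^7*a^11*b^6*mu*y1^2 + 1*x1*x2^7*a^11*b^7*y1*y2*y3*z1 + 1*x1*x2^7*a^11*b^8*y3^2 + (-1)*x1*x2^7*a^12*b^7*y1*y2 + (-1)*x1*x2^8*a^8*b^6*mu^2*y1*y3^2 + (-1)*x1*x2^8*a^9*b^5*mu^2*y1^2*y3 + 1*x1*x2^8*a^9*b^7*mu*y2*y3^2 + 1*x1*x2^8*a^9*b^7*mu*y1^2*y3 + 1*x1*x2^8*a^10*b^6*mu*y1*y2*y3 + 1*x1*x2^8*a^10*b^6*mu*y1^3 + (-1)*x1*x2^8*a^10*b^8*y1*y2*y3 + (-1)*x1*x2^8*a^11*b^7*y1^2*y2 + (-4)*x1^2*x2^6*a^6*b^7*mu^3*y1^2 + (-4)*x1^2*x2^6*a^7*b^7*mu^2*y1^2*y3*z1 + 4*x1^2*x2^6*a^7*b^8*mu^2*y1*y3 + (-4)*x1^2*x2^6*a^8*b^6*mu^2*y1^3*z1 + 4*x1^2*x2^6*a^8*b^7*mu^2*y3^2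 + (-4)*x1^2*x2^6*a^8*b^7*mu^2*y2*y3 + (-4)*x1^2*x2^6*a^8*b^7*mu^2*y1^2 + 4*x1^2*x2^6*a^8*b^8*mu*y1*y3^2*z1 + 4*x1^2*x2^6*a^8*b^8*mu*y1*y2*y3*z1 + 4*x1^2*x2^6*a^8*b^9*mu*y1^2 + 4*x1^2*x2^6*a^9*b^6*mu^2*y1*y3 + 4*x1^2*x2^6*a^9*b^7*mu*y1^2*y3*z1 + 4*x1^2*x2^6*a^9*b^7*mu*y1^2*y2*z1 + 4*x1^2*x2^6*a^9*b^8*mu*y1*y3 + 4*x1^2*x2^6*a^9*b^8*mu*y1*y2 + (-4)*x1^2*x2^6*a^9*b^9*y2*y3^2*z1 + (-4)*x1^2*x2^6*a^9*b^10*y1*y3 + (-4)*x1^2*x2^6*a^10*b^7*mu*y2*y3 + (-4)*x1^2*x2^6*a^10*b^7*mu*y1^2 + (-4)*x1^2*x2^6*a^10*b^8*y1*y2*y3*z1 + (-4)*x1^2*x2^6*a^10*b^9*y3^2 + 4*x1^2*x2^6*a^11*b^8*y1*y2 + 4*x1^2*x2^7*a^7*b^7*mu^2*y1*y3^2 + 4*x1^2*x2^7*a^8*b^6*mu^2*y1^2*y3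 + 1*x1^2*x2^7*a^8*b^6*mu^2*y1^2*y2 + (-4)*x1^2*x2^7*a^8*b^8*mu*y2*y3^2 + (-4)*x1^2*x2^7*a^8*b^8*mu*y1^2*y3 + 1*x1^2*x2^7*a^9*b^5*mu^2*y1*y2*y3 + (-5)*x1^2*x2^7*a^9*b^7*mu*y1*y2*y3 + (-5)*x1^2*x2^7*a^9*b^7*mu*y1^3 + 4*x1^2*x2^7*a^9*b^9*y1*y2*y3 + (-1)*x1^2*x2^7*a^10*b^6*mu*y2*y3^2 + (-1)*x1^2*x2^7*a^10*b^6*mu*y1^2*y3 + 1*x1^2*x2^7*a^10*b^8*y1^2*y3 + 4*x1^2*x2^7*a^10*b^8*y1^2*y2 + 1*x1^2*x2^7*a^11*b^7*y1*y3^2 + 6*x1^3*x2^5*a^5*b^8*mu^3*y1^2 + 6*x1^3*x2^5*a^6*b^8*mu^2*y1^2*y3*z1 + (-6)*x1^3*x2^5*a^6*b^9*mu^2*y1*y3 + 6*x1^3*x2^5*a^7*b^7*mu^2*y1^3*z1 + (-6)*x1^3*x2^5*a^7*b^8*mu^2*y3^2 + 6*x1^3*x2^5*a^7*b^8*mu^2*y2*y3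 + 6*x1^3*x2^5*a^7*b^8*mu^2*y1^2 + (-6)*x1^3*x2^5*a^7*b^9*mu*y1*y3^2*z1 + (-6)*x1^3*x2^5*a^7*b^9*mu*y1*y2*y3*z1 + (-6)*x1^3*x2^5*a^7*b^10*mu*y1^2 + (-6)*x1^3*x2^5*a^8*b^7*mu^2*y1*y3 + (-6)*x1^3*x2^5*a^8*b^8*mu*y1^2*y3*z1 + (-6)*x1^3*x2^5*a^8*b^8*mu*y1^2*y2*z1 + (-6)*x1^3*x2^5*a^8*b^9*mu*y1*y3 + (-6)*x1^3*x2^5*a^8*b^9*mu*y1*y2 + 6*x1^3*x2^5*a^8*b^10*y2*y3^2*z1 + 6*x1^3*x2^5*a^8*b^11*y1*y3 + 6*x1^3*x2^5*a^9*b^8*mu*y2*y3 + 6*x1^3*x2^5*a^9*b^8*mu*y1^2 + 6*x1^3*x2^5*a^9*b^9*y1*y2*y3*z1 + 6*x1^3*x2^5*a^9*b^10*y3^2 + (-6)*x1^3*x2^5*a^10*b^9*y1*y2 + (-6)*x1^3*x2^6*a^6*b^8*mu^2*y1*y3^2 + (-6)*x1^3*x2^6*a^7*b^7*mu^2*y1^2*y3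 + (-4)*x1^3*x2^6*a^7*b^7*mu^2*y1^2*y2 + 6*x1^3*x2^6*a^7*b^9*mu*y2*y3^2 + 6*x1^3*x2^6*a^7*b^9*mu*y1^2*y3 + (-4)*x1^3*x2^6*a^8*b^6*mu^2*y1*y2*y3 + 10*x1^3*x2^6*a^8*b^8*mu*y1*y2*y3 + 10*x1^3*x2^6*a^8*b^8*mu*y1^3 + (-6)*x1^3*x2^6*a^8*b^10*y1*y2*y3 + 4*x1^3*x2^6*a^9*b^7*mu*y2*y3^2 + 4*x1^3*x2^6*a^9*b^7*mu*y1^2*y3 + (-4)*x1^3*x2^6*a^9*b^9*y1^2*y3 + (-6)*x1^3*x2^6*a^9*b^9*y1^2*y2 + (-4)*x1^3*x2^6*a^10*b^8*y1*y3^2 + (-4)*x1^4*x2^4*a^4*b^9*mu^3*y1^2 + (-4)*x1^4*x2^4*a^5*b^9*mu^2*y1^2*y3*z1 + 4*x1^4*x2^4*a^5*b^10*mu^2*y1*y3 + (-4)*x1^4*x2^4*a^6*b^8*mu^2*y1^3*z1 + 4*x1^4*x2^4*a^6*b^9*mu^2*y3^2 + (-4)*x1^4*x2^4*a^6*b^9*mu^2*y2*y3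 + (-4)*x1^4*x2^4*a^6*b^9*mu^2*y1^2 + 4*x1^4*x2^4*a^6*b^10*mu*y1*y3^2*z1 + 4*x1^4*x2^4*a^6*b^10*mu*y1*y2*y3*z1 + 4*x1^4*x2^4*a^6*b^11*mu*y1^2 + 4*x1^4*x2^4*a^7*b^8*mu^2*y1*y3 + 4*x1^4*x2^4*a^7*b^9*mu*y1^2*y3*z1 + 4*x1^4*x2^4*a^7*b^9*mu*y1^2*y2*z1 + 4*x1^4*x2^4*a^7*b^10*mu*y1*y3 + 4*x1^4*x2^4*a^7*b^10*mu*y1*y2 + (-4)*x1^4*x2^4*a^7*b^11*y2*y3^2*z1 + (-4)*x1^4*x2^4*a^7*b^12*y1*y3 + (-4)*x1^4*x2^4*a^8*b^9*mu*y2*y3 + (-4)*x1^4*x2^4*a^8*b^9*mu*y1^2 + (-4)*x1^4*x2^4*a^8*b^10*y1*y2*y3*z1 + (-4)*x1^4*x2^4*a^8*b^11*y3^2 + 4*x1^4*x2^4*a^9*b^10*y1*y2 + 4*x1^4*x2^5*a^5*b^9*mu^2*y1*y3^2 + 4*x1^4*x2^5*a^6*b^8*mu^2*y1^2*y3 + 6*x1^4*x2^5*a^6*b^8*mu^2*y1^2*y2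 + (-4)*x1^4*x2^5*a^6*b^10*mu*y2*y3^2 + (-4)*x1^4*x2^5*a^6*b^10*mu*y1^2*y3 + 6*x1^4*x2^5*a^7*b^7*mu^2*y1*y2*y3 + (-10)*x1^4*x2^5*a^7*b^9*mu*y1*y2*y3 + (-10)*x1^4*x2^5*a^7*b^9*mu*y1^3 + 4*x1^4*x2^5*a^7*b^11*y1*y2*y3 + (-6)*x1^4*x2^5*a^8*b^8*mu*y2*y3^2 + (-6)*x1^4*x2^5*a^8*b^8*mu*y1^2*y3 + 6*x1^4*x2^5*a^8*b^10*y1^2*y3 + 4*x1^4*x2^5*a^8*b^10*y1^2*y2 + 6*x1^4*x2^5*a^9*b^9*y1*y3^2 + 1*x1^5*x2^3*a^3*b^10*mu^3*y1^2 + 1*x1^5*x2^3*a^4*b^10*mu^2*y1^2*y3*z1 + (-1)*x1^5*x2^3*a^4*b^11*mu^2*y1*y3 + 1*x1^5*x2^3*a^5*b^9*mu^2*y1^3*z1 + (-1)*x1^5*x2^3*a^5*b^10*mu^2*y3^2 + 1*x1^5*x2^3*a^5*b^10*mu^2*y2*y3 + 1*x1^5*x2^3*a^5*b^10*mu^2*y1^2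 + (-1)*x1^5*x2^3*a^5*b^11*mu*y1*y3^2*z1 + (-1)*x1^5*x2^3*a^5*b^11*mu*y1*y2*y3*z1 + (-1)*x1^5*x2^3*a^5*b^12*mu*y1^2 + (-1)*x1^5*x2^3*a^6*b^9*mu^2*y1*y3 + (-1)*x1^5*x2^3*a^6*b^10*mu*y1^2*y3*z1 + (-1)*x1^5*x2^3*a^6*b^10*mu*y1^2*y2*z1 + (-1)*x1^5*x2^3*a^6*b^11*mu*y1*y3 + (-1)*x1^5*x2^3*a^6*b^11*mu*y1*y2 + 1*x1^5*x2^3*a^6*b^12*y2*y3^2*z1 + 1*x1^5*x2^3*a^6*b^13*y1*y3 + 1*x1^5*x2^3*a^7*b^10*mu*y2*y3 + 1*x1^5*x2^3*a^7*b^10*mu*y1^2 + 1*x1^5*x2^3*a^7*b^11*y1*y2*y3*z1 + 1*x1^5*x2^3*a^7*b^12*y3^2 + (-1)*x1^5*x2^3*a^8*b^11*y1*y2 + (-1)*x1^5*x2^4*a^4*b^10*mu^2*y1*y3^2 + (-1)*x1^5*x2^4*a^5*b^9*mu^2*y1^2*y3 + (-4)*x1^5*x2^4*a^5*b^9*mu^2*y1^2*y2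 + 1*x1^5*x2^4*a^5*b^11*mu*y2*y3^2 + 1*x1^5*x2^4*a^5*b^11*mu*y1^2*y3 + (-4)*x1^5*x2^4*a^6*b^8*mu^2*y1*y2*y3 + 5*x1^5*x2^4*a^6*b^10*mu*y1*y2*y3 + 5*x1^5*x2^4*a^6*b^10*mu*y1^3 + (-1)*x1^5*x2^4*a^6*b^12*y1*y2*y3 + 4*x1^5*x2^4*a^7*b^9*mu*y2*y3^2 + 4*x1^5*x2^4*a^7*b^9*mu*y1^2*y3 + (-4)*x1^5*x2^4*a^7*b^11*y1^2*y3 + (-1)*x1^5*x2^4*a^7*b^11*y1^2*y2 + (-4)*x1^5*x2^4*a^8*b^10*y1*y3^2 + 1*x1^6*x2^3*a^4*b^10*mu^2*y1^2*y2 + 1*x1^6*x2^3*a^5*b^9*mu^2*y1*y2*y3 + (-1)*x1^6*x2^3*a^5*b^11*mu*y1*y2*y3 + (-1)*x1^6*x2^3*a^5*b^11*mu*y1^3 + (-1)*x1^6*x2^3*a^6*b^10*mu*y2*y3^2 + (-1)*x1^6*x2^3*a^6*b^10*mu*y1^2*y3 + 1*x1^6*x2^3*a^6*b^12*y1^2*y3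 + 1*x1^6*x2^3*a^7*b^11*y1*y3^2) * E4 + ((-1)*x1*x2^7*a^7*b^6*mu^3*y1^2 + (-1)*x1*x2^7*a^7*b^7*mu^2*y1^3*z1 + (-1)*x1*x2^7*a^8*b^6*mu^2*y1^2*y3*z1 + 2*x1*x2^7*a^8*b^7*mu^2*y1*y3 + 2*x1*x2^7*a^8*b^8*mu*y1^2*y3*z1 + (-1)*x1*x2^7*a^9*b^6*mu^2*y1^2 + 2*x1*x2^7*a^9*b^7*mu*y1*y3^2*z1 + (-1)*x1*x2^7*a^9*b^8*mu*y3^2 + (-1)*x1*x2^7*a^9*b^9*y1*y3^2*z1 + 2*x1*x2^7*a^10*b^7*mu*y1*y3 + (-1)*x1*x2^7*a^10*b^8*y3^3*z1 + (-1)*x1*x2^7*a^11*b^8*y3^2 + 4*x1^2*x2^6*a^6*b^7*mu^3*y1^2 + 4*x1^2*x2^6*a^6*b^8*mu^2*y1^3*z1 + 4*x1^2*x2^6*a^7*b^7*mu^2*y1^2*y3*z1 + (-8)*x1^2*x2^6*a^7*b^8*mu^2*y1*y3 + (-8)*x1^2*x2^6*a^7*b^9*mu*y1^2*y3*z1 +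 4*x1^2*x2^6*a^8*b^7*mu^2*y1^2 + (-8)*x1^2*x2^6*a^8*b^8*mu*y1*y3^2*z1 + 4*x1^2*x2^6*a^8*b^9*mu*y3^2 + 4*x1^2*x2^6*a^8*b^10*y1*y3^2*z1 + (-8)*x1^2*x2^6*a^9*b^8*mu*y1*y3 + 4*x1^2*x2^6*a^9*b^9*y3^3*z1 + 4*x1^2*x2^6*a^10*b^9*y3^2 + (-6)*x1^3*x2^5*a^5*b^8*mu^3*y1^2 + (-6)*x1^3*x2^5*a^5*b^9*mu^2*y1^3*z1 + (-6)*x1^3*x2^5*a^6*b^8*mu^2*y1^2*y3*z1 + 12*x1^3*x2^5*a^6*b^9*mu^2*y1*y3 + 12*x1^3*x2^5*a^6*b^10*mu*y1^2*y3*z1 + (-6)*x1^3*x2^5*a^7*b^8*mu^2*y1^2 + 12*x1^3*x2^5*a^7*b^9*mu*y1*y3^2*z1 + (-6)*x1^3*x2^5*a^7*b^10*mu*y3^2 + (-6)*x1^3*x2^5*a^7*b^11*y1*y3^2*z1 + 12*x1^3*x2^5*a^8*b^9*mu*y1*y3 + (-6)*x1^3*x2^5*a^8*b^10*y3^3*z1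 + (-6)*x1^3*x2^5*a^9*b^10*y3^2 + 4*x1^4*x2^4*a^4*b^9*mu^3*y1^2 + 4*x1^4*x2^4*a^4*b^10*mu^2*y1^3*z1 + 4*x1^4*x2^4*a^5*b^9*mu^2*y1^2*y3*z1 + (-8)*x1^4*x2^4*a^5*b^10*mu^2*y1*y3 + (-8)*x1^4*x2^4*a^5*b^11*mu*y1^2*y3*z1 + 4*x1^4*x2^4*a^6*b^9*mu^2*y1^2 + (-8)*x1^4*x2^4*a^6*b^10*mu*y1*y3^2*z1 + 4*x1^4*x2^4*a^6*b^11*mu*y3^2 + 4*x1^4*x2^4*a^6*b^12*y1*y3^2*z1 + (-8)*x1^4*x2^4*a^7*b^10*mu*y1*y3 + 4*x1^4*x2^4*a^7*b^11*y3^3*z1 + 4*x1^4*x2^4*a^8*b^11*y3^2 + (-1)*x1^5*x2^3*a^3*b^10*mu^3*y1^2 + (-1)*x1^5*x2^3*a^3*b^11*mu^2*y1^3*z1 + (-1)*x1^5*x2^3*a^4*b^10*mu^2*y1^2*y3*z1 + 2*x1^5*x2^3*a^4*b^11*mu^2*y1*y3 + 2*x1^5*x2^3*a^4*b^12*mu*y1^2*y3*z1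 + (-1)*x1^5*x2^3*a^5*b^10*mu^2*y1^2 + 2*x1^5*x2^3*a^5*b^11*mu*y1*y3^2*z1 + (-1)*x1^5*x2^3*a^5*b^12*mu*y3^2 + (-1)*x1^5*x2^3*a^5*b^13*y1*y3^2*z1 + 2*x1^5*x2^3*a^6*b^11*mu*y1*y3 + (-1)*x1^5*x2^3*a^6*b^12*y3^3*z1 + (-1)*x1^5*x2^3*a^7*b^12*y3^2) * E5 + ((-1)*x1*x2^7*a^7*b^7*mu^3*y1^3*z1 + 1*x1*x2^7*a^8*b^6*mu^3*y1^3*z2 + 2*x1*x2^7*a^8*b^8*mu^2*y1^2*y3*z1 + 1*x1*x2^7*a^8*b^8*mu^2*y1^2*y2*z1 + (-2)*x1*x2^7*a^9*b^7*mu^2*y1^2*y3*z2 + (-1)*x1*x2^7*a^9*b^7*mu^2*y1^2*y2*z2 + (-1)*x1*x2^7*a^9*b^9*mu*y1*y3^2*z1 + (-2)*x1*x2^7*a^9*b^9*mu*y1*y2*y3*z1 + 1*x1*x2^7*a^10*b^8*mu*y1*y3^2*z2 + 2*x1*x2^7*a^10*b^8*mu*y1*y2*y3*z2 + 1*x1*x2^7*a^10*b^10*y2*y3^2*z1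 + (-1)*x1*x2^7*a^11*b^9*y2*y3^2*z2 + 4*x1^2*x2^6*a^6*b^8*mu^3*y1^3*z1 + (-4)*x1^2*x2^6*a^7*b^7*mu^3*y1^3*z2 + (-8)*x1^2*x2^6*a^7*b^9*mu^2*y1^2*y3*z1 + (-4)*x1^2*x2^6*a^7*b^9*mu^2*y1^2*y2*z1 + 8*x1^2*x2^6*a^8*b^8*mu^2*y1^2*y3*z2 + 4*x1^2*x2^6*a^8*b^8*mu^2*y1^2*y2*z2 + 4*x1^2*x2^6*a^8*b^10*mu*y1*y3^2*z1 + 8*x1^2*x2^6*a^8*b^10*mu*y1*y2*y3*z1 + (-4)*x1^2*x2^6*a^9*b^9*mu*y1*y3^2*z2 + (-8)*x1^2*x2^6*a^9*b^9*mu*y1*y2*y3*z2 + (-4)*x1^2*x2^6*a^9*b^11*y2*y3^2*z1 + 4*x1^2*x2^6*a^10*b^10*y2*y3^2*z2 + (-6)*x1^3*x2^5*a^5*b^9*mu^3*y1^3*z1 + 6*x1^3*x2^5*a^6*b^8*mu^3*y1^3*z2 + 12*x1^3*x2^5*a^6*b^10*mu^2*y1^2*y3*z1 + 6*x1^3*x2^5*a^6*b^10*mu^2*y1^2*y2*z1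 + (-12)*x1^3*x2^5*a^7*b^9*mu^2*y1^2*y3*z2 + (-6)*x1^3*x2^5*a^7*b^9*mu^2*y1^2*y2*z2 + (-6)*x1^3*x2^5*a^7*b^11*mu*y1*y3^2*z1 + (-12)*x1^3*x2^5*a^7*b^11*mu*y1*y2*y3*z1 + 6*x1^3*x2^5*a^8*b^10*mu*y1*y3^2*z2 + 12*x1^3*x2^5*a^8*b^10*mu*y1*y2*y3*z2 + 6*x1^3*x2^5*a^8*b^12*y2*y3^2*z1 + (-6)*x1^3*x2^5*a^9*b^11*y2*y3^2*z2 + 4*x1^4*x2^4*a^4*b^10*mu^3*y1^3*z1 + (-4)*x1^4*x2^4*a^5*b^9*mu^3*y1^3*z2 + (-8)*x1^4*x2^4*a^5*b^11*mu^2*y1^2*y3*z1 + (-4)*x1^4*x2^4*a^5*b^11*mu^2*y1^2*y2*z1 + 8*x1^4*x2^4*a^6*b^10*mu^2*y1^2*y3*z2 + 4*x1^4*x2^4*a^6*b^10*mu^2*y1^2*y2*z2 + 4*x1^4*x2^4*a^6*b^12*mu*y1*y3^2*z1 + 8*x1^4*x2^4*a^6*b^12*mu*y1*y2*y3*z1 +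 (-4)*x1^4*x2^4*a^7*b^11*mu*y1*y3^2*z2 + (-8)*x1^4*x2^4*a^7*b^11*mu*y1*y2*y3*z2 + (-4)*x1^4*x2^4*a^7*b^13*y2*y3^2*z1 + 4*x1^4*x2^4*a^8*b^12*y2*y3^2*z2 + (-1)*x1^5*x2^3*a^3*b^11*mu^3*y1^3*z1 + 1*x1^5*x2^3*a^4*b^10*mu^3*y1^3*z2 + 2*x1^5*x2^3*a^4*b^12*mu^2*y1^2*y3*z1 + 1*x1^5*x2^3*a^4*b^12*mu^2*y1^2*y2*z1 + (-2)*x1^5*x2^3*a^5*b^11*mu^2*y1^2*y3*z2 + (-1)*x1^5*x2^3*a^5*b^11*mu^2*y1^2*y2*z2 + (-1)*x1^5*x2^3*a^5*b^13*mu*y1*y3^2*z1 + (-2)*x1^5*x2^3*a^5*b^13*mu*y1*y2*y3*z1 + 1*x1^5*x2^3*a^6*b^12*mu*y1*y3^2*z2 + 2*x1^5*x2^3*a^6*b^12*mu*y1*y2*y3*z2 + 1*x1^5*x2^3*a^6*b^14*y2*y3^2*z1 + (-1)*x1^5*x2^3*a^7*b^13*y2*y3^2*z2) * E7 + ((-1)*x1*x2^7*a^7*b^5*mu^3*y1^3*z1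 + 2*x1*x2^7*a^8*b^6*mu^2*y1^2*y3*z1 + 1*x1*x2^7*a^8*b^6*mu^2*y1^2*y2*z1 + (-1)*x1*x2^7*a^9*b^7*mu*y1*y3^2*z1 + (-2)*x1*x2^7*a^9*b^7*mu*y1*y2*y3*z1 + 1*x1*x2^7*a^10*b^8*y2*y3^2*z1 + 4*x1^2*x2^6*a^6*b^6*mu^3*y1^3*z1 + (-8)*x1^2*x2^6*a^7*b^7*mu^2*y1^2*y3*z1 + (-4)*x1^2*x2^6*a^7*b^7*mu^2*y1^2*y2*z1 + 4*x1^2*x2^6*a^8*b^8*mu*y1*y3^2*z1 + 8*x1^2*x2^6*a^8*b^8*mu*y1*y2*y3*z1 + (-4)*x1^2*x2^6*a^9*b^9*y2*y3^2*z1 + (-6)*x1^3*x2^5*a^5*b^7*mu^3*y1^3*z1 + 12*x1^3*x2^5*a^6*b^8*mu^2*y1^2*y3*z1 + 6*x1^3*x2^5*a^6*b^8*mu^2*y1^2*y2*z1 + (-6)*x1^3*x2^5*a^7*b^9*mu*y1*y3^2*z1 + (-12)*x1^3*x2^5*a^7*b^9*mu*y1*y2*y3*z1 + 6*x1^3*x2^5*a^8*b^10*y2*y3^2*z1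 + 4*x1^4*x2^4*a^4*b^8*mu^3*y1^3*z1 + (-8)*x1^4*x2^4*a^5*b^9*mu^2*y1^2*y3*z1 + (-4)*x1^4*x2^4*a^5*b^9*mu^2*y1^2*y2*z1 + 4*x1^4*x2^4*a^6*b^10*mu*y1*y3^2*z1 + 8*x1^4*x2^4*a^6*b^10*mu*y1*y2*y3*z1 + (-4)*x1^4*x2^4*a^7*b^11*y2*y3^2*z1 + (-1)*x1^5*x2^3*a^3*b^9*mu^3*y1^3*z1 + 2*x1^5*x2^3*a^4*b^10*mu^2*y1^2*y3*z1 + 1*x1^5*x2^3*a^4*b^10*mu^2*y1^2*y2*z1 + (-1)*x1^5*x2^3*a^5*b^11*mu*y1*y3^2*z1 + (-2)*x1^5*x2^3*a^5*b^11*mu*y1*y2*y3*z1 + 1*x1^5*x2^3*a^6*b^12*y2*y3^2*z1) * E8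
  exact ⟨hw12, hw23⟩
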